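/- arXiv:1302.0949 — 7 statements merged into one kernel-verified Lean document; each statement's English description precedes it below -/
import Mathlib

section
/- The bounded linear operator 𝒦 on C(Ω̄) defined by (𝒦u)(x) = ∫_Ω K(x,y) u(y)/(a(x₀)−a(y)) dy is a compact operator; consequently its spectrum consists of 0 together with isolated eigenvalues. -/
open MeasureTheory Set Metric BoundedContinuousFunction Classical Filter Topology

section RieszSchauder

variable {X : Type*} [NormedAddCommGroup X] [NormedSpace ℝ X] [CompleteSpace X]

/-- Riesz-lemma-style point: a unit vector in any submodule containing `u` and `F`,
at distance `≥ 1/2` from the closed submodule `F`. -/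
lemma riesz_point (F : Submodule ℝ X) (hFc : IsClosed (F : Set X)) {u : X} (hu : u ∉ F) :
    ∃ x : X, ‖x‖ = 1 ∧ (∀ z ∈ F, (1:ℝ)/2 ≤ ‖x - z‖) ∧
      ∀ G : Submodule ℝ X, u ∈ G → F ≤ G → x ∈ G := by
  have hFne : (F : Set X).Nonempty := ⟨0, F.zero_mem⟩
  have hd : 0 < infDist u (F : Set X) := (hFc.notMem_iff_infDist_pos hFne).1 hu
  set d := infDist u (F : Set X) with hdef
  obtain ⟨w, hwF, hw⟩ := (infDist_lt_iff hFne).1 (by linarith : infDist u (F : Set X) < 2 * d)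
  have huw : u - w ≠ 0 := by
    intro h
    exact hu (by rw [sub_eq_zero] at h; exact h ▸ hwF)
  have hnorm : ‖u - w‖ ≠ 0 := norm_ne_zero_iff.2 huw
  have hnormpos : 0 < ‖u - w‖ := norm_pos_iff.2 huw
  have hwle : ‖u - w‖ < 2 * d := by rwa [← dist_eq_norm]
  refine ⟨‖u - w‖⁻¹ • (u - w), ?_, ?_, ?_⟩
  · rw [norm_smul, norm_inv, norm_norm, inv_mul_cancel₀ hnorm]
  · intro z hz
    have key : ‖u - w‖⁻¹ • (u - w) - z = ‖u - w‖⁻¹ • (u - (w + ‖u - w‖ • z)) := by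
      rw [smul_sub, smul_sub, smul_add, smul_smul, inv_mul_cancel₀ hnorm, one_smul]
      abel
    rw [key, norm_smul, norm_inv, norm_norm]
    have hmem : w + ‖u - w‖ • z ∈ F := F.add_mem hwF (F.smul_mem _ hz)
    have h1 : d ≤ ‖u - (w + ‖u - w‖ • z)‖ := by
      have h2 := infDist_le_dist_of_mem (x := u) hmem
      rw [dist_eq_norm] at h2
      exact h2
    have h3 : (2 * d)⁻¹ ≤ ‖u - w‖⁻¹ := by
      apply inv_anti₀ hnormpos hwle.le
    calc (1:ℝ)/2 = (2 * d)⁻¹ * d := by field_simp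
    _ ≤ ‖u - w‖⁻¹ * ‖u - (w + ‖u - w‖ • z)‖ := by
        apply mul_le_mul h3 h1 hd.le (by positivity)
  · intro G huG hFG
    exact G.smul_mem _ (G.sub_mem huG (hFG hwF))

/-- In a compact set there is no sequence with uniformly separated terms. -/
lemma sep_seq_absurd {A : Set X} (hA : IsCompact A) {g : ℕ → X} (hg : ∀ n, g n ∈ A)
    {c : ℝ} (hc : 0 < c) (hsep : ∀ m n : ℕ, m < n → c ≤ ‖g n - g m‖) : False := by
  obtain ⟨x, -, φ, hφ, hconv⟩ := hA.isSeqCompact hg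
  rw [Metric.tendsto_atTop] at hconv
  obtain ⟨N, hN⟩ := hconv (c / 2) (by positivity)
  have h1 := hN N le_rfl
  have h2 := hN (N + 1) (Nat.le_succ N)
  have h3 : c ≤ ‖g (φ (N + 1)) - g (φ N)‖ := hsep _ _ (hφ (Nat.lt_succ_self N))
  have h4 : ‖g (φ (N + 1)) - g (φ N)‖ ≤ dist (g (φ (N+1))) x + dist (g (φ N)) x := by
    rw [← dist_eq_norm]
    exact dist_triangle_right _ _ _
  simp only [Function.comp] at h1 h2
  linarith

lemma eig_or_bddBelow {T : X →L[ℝ] X} (hT : IsCompactOperator ⇑T) {l : ℝ} (hl : l ≠ 0)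
    (hinj : ∀ x, T x = l • x → x = 0) :
    ∃ c > 0, ∀ x, c * ‖x‖ ≤ ‖l • x - T x‖ := by
  by_contra hcon
  push_neg at hcon
  have hseq : ∀ m : ℕ, ∃ z : X, ‖z‖ = 1 ∧ ‖l • z - T z‖ < 1 / (m + 1) := by
    intro m
    obtain ⟨x, hx⟩ := hcon (1 / (m + 1)) (by positivity)
    have hx0 : x ≠ 0 := by
      rintro rfl
      simp at hx
    have hxn : 0 < ‖x‖ := norm_pos_iff.2 hx0
    refine ⟨‖x‖⁻¹ • x, ?_, ?_⟩
    · rw [norm_smul, norm_inv, norm_norm, inv_mul_cancel₀ hxn.ne']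
    · have : l • (‖x‖⁻¹ • x) - T (‖x‖⁻¹ • x) = ‖x‖⁻¹ • (l • x - T x) := by
        rw [T.map_smul, smul_sub, smul_comm]
      rw [this, norm_smul, norm_inv, norm_norm]
      rw [inv_mul_lt_iff₀ hxn]
      calc ‖l • x - T x‖ < 1 / (m + 1) * ‖x‖ := hx
      _ = ‖x‖ * (1 / (m + 1)) := by ring
  choose z hz1 hz2 using hseq
  have hA : IsCompact (closure (⇑T '' closedBall 0 1)) := by
    have := IsCompactOperator.isCompact_closure_image_closedBall (f := (T : X →ₗ[ℝ] X)) hT 1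
    simpa using this
  have hTz : ∀ m, T (z m) ∈ closure (⇑T '' closedBall 0 1) :=
    fun m => subset_closure ⟨z m, by simp [hz1 m], rfl⟩
  obtain ⟨y, -, φ, hφ, hconv⟩ := hA.isSeqCompact hTz
  have hlz : Tendsto (fun m => l • z (φ m) - T (z (φ m))) atTop (𝓝 0) := by
    apply squeeze_zero_norm (a := fun m : ℕ => 1 / (m + 1))
    · intro m
      refine le_trans (hz2 (φ m)).le ?_
      apply one_div_le_one_div_of_le (by positivity)
      have hm : (m : ℝ) ≤ (φ m : ℝ) := by exact_mod_cast hφ.le_apply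
      linarith
    · exact tendsto_one_div_add_atTop_nhds_zero_nat
  have hzconv : Tendsto (fun m => z (φ m)) atTop (𝓝 (l⁻¹ • y)) := by
    have h1 : Tendsto (fun m => l • z (φ m)) atTop (𝓝 y) := by
      have h2 := hlz.add hconv
      simp only [Function.comp] at h2 ⊢
      simpa using h2
    have h3 := h1.const_smul l⁻¹
    simp only [smul_smul, inv_mul_cancel₀ hl, one_smul] at h3
    exact h3
  set w := l⁻¹ • y with hw
  have hw1 : ‖w‖ = 1 := by
    have h4 := hzconv.norm
    simp only [hz1] at h4
    exact (tendsto_nhds_unique tendsto_const_nhds h4).symm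
  have hTw : T w = l • w := by
    have h5 : Tendsto (fun m => T (z (φ m))) atTop (𝓝 (T w)) :=
      (T.continuous.tendsto _).comp hzconv
    have h6 : T w = y := tendsto_nhds_unique h5 hconv
    rw [h6, hw, smul_smul, mul_inv_cancel₀ hl, one_smul]
  have := hinj w hTw
  rw [this] at hw1
  simp at hw1

end RieszSchauder

section RieszSchauder2

variable {X : Type*} [NormedAddCommGroup X] [NormedSpace ℝ X] [CompleteSpace X]

lemma surjective_of_injective {T : X →L[ℝ] X} (hT : IsCompactOperator ⇑T) {l : ℝ} (hl : l ≠ 0)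
    {c : ℝ} (hc : 0 < c) (hbb : ∀ x, c * ‖x‖ ≤ ‖l • x - T x‖) :
    Function.Surjective (fun x => l • x - T x) := by
  set S : X →L[ℝ] X := l • ContinuousLinearMap.id ℝ X - T with hSdef
  have hS : ∀ x, S x = l • x - T x := by
    intro x
    simp [hSdef]
  have hbbk : ∀ (k : ℕ) (x : X), c ^ k * ‖x‖ ≤ ‖(S ^ k) x‖ := by
    intro k
    induction k with
    | zero => intro x; simp
    | succ k ih =>
      intro x
      have h1 : (S ^ (k + 1)) x = (S ^ k) (S x) := by
        rw [pow_succ, ContinuousLinearMap.mul_apply]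
      rw [h1]
      calc c ^ (k + 1) * ‖x‖ = c ^ k * (c * ‖x‖) := by ring
      _ ≤ c ^ k * ‖S x‖ := by
            apply mul_le_mul_of_nonneg_left _ (by positivity)
            rw [hS]; exact hbb x
      _ ≤ ‖(S ^ k) (S x)‖ := ih (S x)
  have hSkinj : ∀ (k : ℕ) (x y : X), (S ^ k) x = (S ^ k) y → x = y := by
    intro k x y hxy
    have h1 : (S ^ k) (x - y) = 0 := by rw [map_sub, hxy, sub_self]
    have h2 := hbbk k (x - y)
    rw [h1, norm_zero] at h2
    have h3 : ‖x - y‖ ≤ 0 := by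
      have : 0 < c ^ k := by positivity
      nlinarith [norm_nonneg (x - y)]
    rw [← sub_eq_zero]
    exact norm_le_zero_iff.1 h3
  have hRclosed : ∀ k : ℕ, IsClosed (Set.range ⇑(S ^ k)) := by
    intro k
    have hck : (0:ℝ) < c ^ k := by positivity
    have halip : AntilipschitzWith ⟨(c ^ k)⁻¹, by positivity⟩ ⇑(S ^ k) := by
      apply ContinuousLinearMap.antilipschitz_of_bound
      intro x
      change ‖x‖ ≤ (c ^ k)⁻¹ * ‖(S ^ k) x‖
      calc ‖x‖ = (c ^ k)⁻¹ * (c ^ k * ‖x‖) := by field_simp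
      _ ≤ (c ^ k)⁻¹ * ‖(S ^ k) x‖ :=
          mul_le_mul_of_nonneg_left (hbbk k x) (by positivity)
    exact halip.isClosed_range (S ^ k).uniformContinuous
  set R : ℕ → Submodule ℝ X := fun k => LinearMap.range ((S ^ k : X →L[ℝ] X) : X →ₗ[ℝ] X) with hRdef
  have hRmem : ∀ (k : ℕ) (x : X), (S ^ k) x ∈ R k := fun k x => LinearMap.mem_range_self _ x
  have hRclosed' : ∀ k, IsClosed ((R k : Set X)) := by
    intro k
    have : (R k : Set X) = Set.range ⇑(S ^ k) := by
      rw [hRdef]; ext z; simp only [SetLike.mem_coe, LinearMap.mem_range, Set.mem_range]; exact Iff.rfl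
    rw [this]; exact hRclosed k
  have hSR : ∀ (k : ℕ) (x : X), x ∈ R k → S x ∈ R (k + 1) := by
    rintro k x ⟨y, rfl⟩
    exact ⟨y, by show (S ^ (k + 1)) y = S ((S ^ k) y); rw [pow_succ', ContinuousLinearMap.mul_apply]⟩
  have hRanti : ∀ {j k : ℕ}, k ≤ j → R j ≤ R k := by
    intro j k hkj
    obtain ⟨i, rfl⟩ := Nat.exists_eq_add_of_le hkj
    rintro z ⟨y, rfl⟩
    exact ⟨(S ^ i) y, by show (S ^ k) ((S ^ i) y) = (S ^ (k + i)) y; rw [← ContinuousLinearMap.mul_apply, ← pow_add]⟩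
  by_contra hsurj
  rw [Function.Surjective] at hsurj
  push_neg at hsurj
  obtain ⟨v, hv⟩ := hsurj
  have hv1 : v ∉ R 1 := by
    rintro ⟨y, hy⟩
    exact hv y (by rw [← hS]; simpa using hy)
  have hu : ∀ k : ℕ, (S ^ k) v ∉ R (k + 1) := by
    rintro k ⟨y, hy⟩
    apply hv1
    have h1 : (S ^ (k + 1)) y = (S ^ k) (S y) := by
      rw [pow_succ, ContinuousLinearMap.mul_apply]
    change (S ^ (k + 1)) y = (S ^ k) v at hy
    rw [h1] at hy
    have := hSkinj k _ _ hy.symm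
    rw [this]
    exact ⟨y, by simp⟩
  have hriesz : ∀ k : ℕ, ∃ x : X, ‖x‖ = 1 ∧ (∀ z ∈ R (k + 1), (1:ℝ)/2 ≤ ‖x - z‖) ∧ x ∈ R k := by
    intro k
    obtain ⟨x, hx1, hx2, hx3⟩ := riesz_point (R (k + 1)) (hRclosed' (k + 1)) (hu k)
    exact ⟨x, hx1, hx2, hx3 (R k) (hRmem k v) (hRanti (Nat.le_succ k))⟩
  choose x hx1 hx2 hx3 using hriesz
  -- separation of T images
  apply sep_seq_absurd (A := closure (⇑T '' closedBall 0 1))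
      (g := fun k => T (x k)) (c := |l| / 2)
  · have := IsCompactOperator.isCompact_closure_image_closedBall (f := (T : X →ₗ[ℝ] X)) hT 1
    simpa using this
  · intro k
    exact subset_closure ⟨x k, by simp [hx1 k], rfl⟩
  · have : 0 < |l| := abs_pos.2 hl
    linarith
  · intro m k hmk
    set z : X := l⁻¹ • (S (x m) - S (x k) + l • x k) with hzdef
    have hzmem : z ∈ R (m + 1) := by
      apply Submodule.smul_mem
      apply Submodule.add_mem
      · apply Submodule.sub_mem
        · exact hSR m (x m) (hx3 m)
        · exact hRanti (by omega : m + 1 ≤ k + 1) (hSR k (x k) (hx3 k))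
      · exact Submodule.smul_mem _ _ (hRanti (by omega : m + 1 ≤ k) (hx3 k))
    have heq : T (x k) - T (x m) = -(l • (x m - z)) := by
      have hlz : l • z = S (x m) - S (x k) + l • x k := by
        rw [hzdef, smul_smul, mul_inv_cancel₀ hl, one_smul]
      have e1 := hS (x m)
      have e2 := hS (x k)
      have : l • (x m - z) = T (x m) - T (x k) := by
        rw [smul_sub, hlz, e1, e2]
        abel
      rw [this]; abel
    rw [heq, norm_neg, norm_smul, Real.norm_eq_abs]
    have h12 : (1:ℝ)/2 ≤ ‖x m - z‖ := hx2 m z hzmem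
    calc |l| / 2 = |l| * (1/2) := by ring
    _ ≤ |l| * ‖x m - z‖ := by
        apply mul_le_mul_of_nonneg_left h12 (abs_nonneg l)

end RieszSchauder2

section RieszSchauder3

variable {X : Type*} [NormedAddCommGroup X] [NormedSpace ℝ X] [CompleteSpace X]

lemma compact_spectrum_eigen {T : X →L[ℝ] X} (hT : IsCompactOperator ⇑T) {l : ℝ}
    (hl : l ∈ spectrum ℝ T) (hl0 : l ≠ 0) : ∃ u : X, u ≠ 0 ∧ T u = l • u := by
  by_contra hcon
  push_neg at hcon
  have hinj : ∀ x, T x = l • x → x = 0 := by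
    intro x hx
    by_contra h
    exact hcon x h hx
  obtain ⟨c, hc, hbb⟩ := eig_or_bddBelow hT hl0 hinj
  have hsurj := surjective_of_injective hT hl0 hc hbb
  apply spectrum.mem_iff.1 hl
  have hS : ∀ x : X, (algebraMap ℝ (X →L[ℝ] X) l - T) x = l • x - T x := by
    intro x
    simp [Algebra.algebraMap_eq_smul_one]
  rw [ContinuousLinearMap.isUnit_iff_bijective]
  constructor
  · intro x y hxy
    rw [hS, hS] at hxy
    have h1 : l • (x - y) - T (x - y) = 0 := by
      rw [map_sub, smul_sub]
      rw [sub_eq_zero]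
      rw [sub_eq_sub_iff_sub_eq_sub]
      exact hxy
    have h2 := hbb (x - y)
    rw [h1, norm_zero] at h2
    have h3 : ‖x - y‖ ≤ 0 := by nlinarith [norm_nonneg (x - y)]
    rw [← sub_eq_zero]
    exact norm_le_zero_iff.1 h3
  · intro y
    obtain ⟨x, hx⟩ := hsurj y
    exact ⟨x, by rw [hS]; exact hx⟩

lemma compact_spectrum_isolated {T : X →L[ℝ] X} (hT : IsCompactOperator ⇑T) {l : ℝ}
    (hl0 : l ≠ 0) :
    ∃ ε > (0:ℝ), ∀ l' ∈ spectrum ℝ T, l' ≠ l → ε ≤ |l' - l| := by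
  by_contra hcon
  push_neg at hcon
  -- hcon : ∀ ε > 0, ∃ l' ∈ spectrum ℝ T, l' ≠ l ∧ |l' - l| < ε
  have hlpos : (0:ℝ) < |l| := abs_pos.2 hl0
  have pick : ∀ r : ℝ, 0 < r → {x : ℝ // x ∈ spectrum ℝ T ∧ x ≠ l ∧ |x - l| < r} := by
    intro r hr
    choose l' h1 h2 h3 using hcon r hr
    exact ⟨l', h1, h2, h3⟩
  set P : ℝ → Prop := fun x => x ∈ spectrum ℝ T ∧ x ≠ l ∧ |x - l| < |l| / 2 with hP
  have hstep : ∀ p : {x : ℝ // P x},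
      {q : {x : ℝ // P x} // |(q : ℝ) - l| < |(p : ℝ) - l|} := by
    intro p
    have hppos : 0 < |(p : ℝ) - l| := abs_pos.2 (sub_ne_zero.2 p.2.2.1)
    obtain ⟨x, hx1, hx2, hx3⟩ := pick _ hppos
    exact ⟨⟨x, hx1, hx2, lt_trans hx3 p.2.2.2⟩, hx3⟩
  set step : {x : ℝ // P x} → {x : ℝ // P x} := fun p => (hstep p).1 with hstepdef
  have hF0 : {x : ℝ // P x} := by
    obtain ⟨x, hx1, hx2, hx3⟩ := pick (|l| / 2) (by positivity)
    exact ⟨x, hx1, hx2, hx3⟩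
  set F : ℕ → {x : ℝ // P x} := fun n => step^[n] hF0 with hFdef
  have hFsucc : ∀ n, F (n + 1) = step (F n) := by
    intro n
    rw [hFdef]
    exact Function.iterate_succ_apply' step n hF0
  have hdec : ∀ n, |(F (n + 1) : ℝ) - l| < |(F n : ℝ) - l| := by
    intro n
    rw [hFsucc n]
    exact (hstep (F n)).2
  have hanti : StrictAnti (fun n => |(F n : ℝ) - l|) := strictAnti_nat_of_succ_lt hdec
  have hFinj : Function.Injective (fun n => (F n : ℝ)) := by
    intro m k hmk
    simp only at hmk
    have habs : |(F m : ℝ) - l| = |(F k : ℝ) - l| := by rw [hmk]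
    exact hanti.injective habs
  have hFnz : ∀ n, ((F n : ℝ)) ≠ 0 := by
    intro n
    have h1 := (F n).2.2.2
    intro h
    rw [h] at h1
    rw [abs_sub_comm] at h1
    simp at h1
    linarith [abs_nonneg l]
  have hFbig : ∀ n, |l| / 2 ≤ |(F n : ℝ)| := by
    intro n
    have h1 := (F n).2.2.2
    have h2 : |l| - |(F n : ℝ) - l| ≤ |(F n : ℝ)| := by
      have := abs_sub_abs_le_abs_sub l ((F n : ℝ))
      rw [abs_sub_comm] at this
      linarith [this]
    linarith
  -- eigenvectors
  have heig : ∀ n : ℕ, ∃ u : X, u ≠ 0 ∧ T u = ((F n : ℝ)) • u := by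
    intro n
    obtain ⟨u, hu1, hu2⟩ := compact_spectrum_eigen hT (F n).2.1 (hFnz n)
    exact ⟨u, hu1, hu2⟩
  choose e he0 hTe using heig
  have hli : LinearIndependent ℝ e := by
    apply Module.End.eigenvectors_linearIndependent' (↑T : X →ₗ[ℝ] X)
      (fun n => (F n : ℝ)) hFinj
    intro i
    constructor
    · rw [Module.End.mem_eigenspace_iff]
      simpa using hTe i
    · exact he0 i
  set Y : ℕ → Submodule ℝ X := fun n => Submodule.span ℝ (e '' Iic n) with hYdef
  have hYfd : ∀ n, FiniteDimensional ℝ (Y n) := by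
    intro n
    exact FiniteDimensional.span_of_finite ℝ ((finite_Iic n).image e)
  have hYc : ∀ n, IsClosed ((Y n : Set X)) := by
    intro n
    have := hYfd n
    exact Submodule.closed_of_finiteDimensional _
  have hYmono : ∀ {m k : ℕ}, m ≤ k → Y m ≤ Y k := by
    intro m k hmk
    apply Submodule.span_mono
    apply image_mono
    exact Iic_subset_Iic.2 hmk
  have henot : ∀ n, e (n + 1) ∉ Y n := by
    intro n
    exact hli.notMem_span_image (by simp)
  have heY : ∀ n, e (n + 1) ∈ Y (n + 1) :=
    fun n => Submodule.subset_span ⟨n + 1, by simp, rfl⟩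
  have hTY : ∀ (k : ℕ) (x : X), x ∈ Y k → T x ∈ Y k := by
    intro k
    have hle : Submodule.map (↑T : X →ₗ[ℝ] X) (Y k) ≤ Y k := by
      rw [hYdef, Submodule.map_span_le]
      rintro m ⟨i, hik, rfl⟩
      have : (↑T : X →ₗ[ℝ] X) (e i) = ((F i : ℝ)) • e i := by simpa using hTe i
      rw [this]
      exact Submodule.smul_mem _ _ (Submodule.subset_span ⟨i, hik, rfl⟩)
    intro x hx
    exact hle ⟨x, hx, rfl⟩
  have hSY : ∀ (k : ℕ) (x : X), x ∈ Y (k + 1) → T x - ((F (k+1) : ℝ)) • x ∈ Y k := by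
    intro k
    set G : X →ₗ[ℝ] X := (↑T : X →ₗ[ℝ] X) - ((F (k+1) : ℝ)) • LinearMap.id with hGdef
    have hle : Submodule.map G (Y (k + 1)) ≤ Y k := by
      rw [hYdef, Submodule.map_span_le]
      rintro m ⟨i, hik, rfl⟩
      have hGe : G (e i) = (((F i : ℝ)) - ((F (k+1) : ℝ))) • e i := by
        rw [hGdef]
        simp only [LinearMap.sub_apply, LinearMap.smul_apply, LinearMap.id_apply]
        have : (↑T : X →ₗ[ℝ] X) (e i) = ((F i : ℝ)) • e i := by simpa using hTe i
        rw [this, sub_smul]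
      rw [hGe]
      have hik' : i ≤ k + 1 := by simpa using hik
      rcases Nat.lt_succ_iff_lt_or_eq.1 (Nat.lt_succ_of_le hik') with h1 | h1
      · exact Submodule.smul_mem _ _
          (Submodule.subset_span ⟨i, by simpa using Nat.lt_succ_iff.1 h1, rfl⟩)
      · rw [h1]
        simp
    intro x hx
    have : G x ∈ Y k := hle ⟨x, hx, rfl⟩
    simpa [hGdef] using this
  have hriesz : ∀ k : ℕ, ∃ x : X, ‖x‖ = 1 ∧ (∀ z ∈ Y k, (1:ℝ)/2 ≤ ‖x - z‖) ∧ x ∈ Y (k + 1) := by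
    intro k
    obtain ⟨x, hx1, hx2, hx3⟩ := riesz_point (Y k) (hYc k) (henot k)
    exact ⟨x, hx1, hx2, hx3 (Y (k + 1)) (heY k) (hYmono (Nat.le_succ k))⟩
  choose g hg1 hg2 hg3 using hriesz
  apply sep_seq_absurd (A := closure (⇑T '' closedBall 0 1))
      (g := fun k => T (g k)) (c := |l| / 4)
  · have := IsCompactOperator.isCompact_closure_image_closedBall (f := (T : X →ₗ[ℝ] X)) hT 1
    simpa using this
  · intro k
    exact subset_closure ⟨g k, by simp [hg1 k], rfl⟩
  · linarith
  · intro m k hmk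
    set lk : ℝ := (F (k + 1) : ℝ) with hlk
    have hlknz : lk ≠ 0 := hFnz (k + 1)
    set z : X := lk⁻¹ • (T (g m) - (T (g k) - lk • g k)) with hzdef
    have hzmem : z ∈ Y k := by
      apply Submodule.smul_mem
      apply Submodule.sub_mem
      · exact hYmono (by omega : m + 1 ≤ k) (hTY (m + 1) (g m) (hg3 m))
      · exact hSY k (g k) (hg3 k)
    have heq : T (g k) - T (g m) = lk • (g k - z) := by
      have hlz : lk • z = T (g m) - (T (g k) - lk • g k) := by
        rw [hzdef, smul_smul, mul_inv_cancel₀ hlknz, one_smul]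
      rw [smul_sub, hlz]
      abel
    rw [heq, norm_smul, Real.norm_eq_abs]
    have h12 : (1:ℝ)/2 ≤ ‖g k - z‖ := hg2 k z hzmem
    have hbig := hFbig (k + 1)
    calc |l| / 4 = (|l| / 2) * (1/2) := by ring
    _ ≤ |lk| * ‖g k - z‖ := by
        apply mul_le_mul hbig h12 (by norm_num) (abs_nonneg lk)

end RieszSchauder3

/-- Extension of a bounded continuous function on a subtype by zero. -/
noncomputable def extFun {α : Type*} [TopologicalSpace α] (s : Set α)
    (u : ↥s →ᵇ ℝ) (y : α) : ℝ :=
  if hy : y ∈ s then u ⟨y, hy⟩ else 0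

lemma extFun_abs_le {α : Type*} [TopologicalSpace α] (s : Set α) (u : ↥s →ᵇ ℝ) (y : α) :
    |extFun s u y| ≤ ‖u‖ := by
  rw [extFun]
  split
  · rw [← Real.norm_eq_abs]
    exact BoundedContinuousFunction.norm_coe_le_norm u _
  · simp [norm_nonneg]

lemma extFun_continuousOn {α : Type*} [TopologicalSpace α] (s : Set α) (u : ↥s →ᵇ ℝ) :
    ContinuousOn (extFun s u) s := by
  rw [continuousOn_iff_continuous_restrict]
  have h : Set.restrict s (extFun s u) = fun y : s => u y := by
    funext y
    show extFun s u y = u y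
    simp only [extFun, dif_pos y.2]
  convert u.continuous using 1
  exact h

lemma extFun_add {α : Type*} [TopologicalSpace α] (s : Set α) (u v : ↥s →ᵇ ℝ) (y : α) :
    extFun s (u + v) y = extFun s u y + extFun s v y := by
  rw [extFun, extFun, extFun]
  split
  · simp
  · simp

lemma extFun_smul {α : Type*} [TopologicalSpace α] (s : Set α) (c : ℝ) (u : ↥s →ᵇ ℝ) (y : α) :
    extFun s (c • u) y = c * extFun s u y := by
  rw [extFun, extFun]
  split
  · simp
  · simp


set_option maxHeartbeats 1000000 in
/-- The operator `𝒦u(x) = ∫_Ω K(x,y) u(y)/(a(x₀)-a(y)) dy`, viewed as a bounded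
linear operator on the continuous functions on the compact set `Ω̄`, is a compact
operator, and every nonzero element of its spectrum is an isolated eigenvalue. -/
theorem stmt4 {n : ℕ} (Ω : Set (EuclideanSpace ℝ (Fin n)))
    (hne : Ω.Nonempty) (hbd : Bornology.IsBounded Ω) (hop : IsOpen Ω)
    (hconn : IsConnected Ω)
    (K : EuclideanSpace ℝ (Fin n) → EuclideanSpace ℝ (Fin n) → ℝ)
    (hKcont : Continuous fun p : EuclideanSpace ℝ (Fin n) × EuclideanSpace ℝ (Fin n) =>
      K p.1 p.2)
    (hKnn : ∀ x y, 0 ≤ K x y)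
    (c₀ ε₀ : ℝ) (hc₀ : 0 < c₀) (hε₀ : 0 < ε₀)
    (hKpos : ∀ x ∈ Ω, ∀ y ∈ ball x ε₀, c₀ < K x y)
    (a : EuclideanSpace ℝ (Fin n) → ℝ)
    (ha : ContinuousOn a (closure Ω))
    (habd : ∃ C, ∀ x ∈ closure Ω, |a x| ≤ C)
    (x₀ : EuclideanSpace ℝ (Fin n)) (hx₀ : x₀ ∈ closure Ω)
    (hmax : a x₀ = sSup (a '' closure Ω))
    (hL1 : IntegrableOn (fun y => 1 / (a x₀ - a y)) Ω) :
    ∃ T : (↥(closure Ω) →ᵇ ℝ) →L[ℝ] (↥(closure Ω) →ᵇ ℝ),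
      (∀ u : ↥(closure Ω) →ᵇ ℝ, ∀ x : ↥(closure Ω),
        T u x = ∫ y in Ω,
          K (↑x) y * (if hy : y ∈ closure Ω then u ⟨y, hy⟩ else 0) / (a x₀ - a y)) ∧
      IsCompactOperator T ∧
      ∀ l ∈ spectrum ℝ T, l ≠ 0 →
        (∃ u : ↥(closure Ω) →ᵇ ℝ, u ≠ 0 ∧ T u = l • u) ∧
        ∃ ε > (0 : ℝ), ∀ l' ∈ spectrum ℝ T, l' ≠ l → ε ≤ |l' - l| := by
  classical
  have hQcomp : IsCompact (closure Ω) := hbd.isCompact_closure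
  haveI : CompactSpace ↥(closure Ω) := isCompact_iff_compactSpace.1 hQcomp
  -- bound on K
  obtain ⟨MK0, hMK0⟩ := (hQcomp.prod hQcomp).exists_bound_of_continuousOn hKcont.continuousOn
  set MK := max MK0 0 with hMK
  have hMKnn : 0 ≤ MK := le_max_right _ _
  have hKb : ∀ x ∈ (closure Ω), ∀ y ∈ (closure Ω), |K x y| ≤ MK := by
    intro x hx y hy
    have := hMK0 (x, y) ⟨hx, hy⟩
    rw [Real.norm_eq_abs] at this
    exact le_trans this (le_max_left _ _)
  -- integrability of the weight
  have hinv : IntegrableOn (fun y => (a x₀ - a y)⁻¹) Ω := by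
    simpa only [one_div] using hL1
  set I : ℝ := ∫ y in Ω, |(a x₀ - a y)⁻¹| with hIdef
  have hI0 : 0 ≤ I := integral_nonneg (fun y => abs_nonneg _)
  have hIint : IntegrableOn (fun y => |(a x₀ - a y)⁻¹|) Ω := hinv.norm
  -- integrability of the integrand
  have hint : ∀ (u : ↥(closure Ω) →ᵇ ℝ) (x : EuclideanSpace ℝ (Fin n)), x ∈ (closure Ω) →
      IntegrableOn (fun y => K x y * extFun (closure Ω) u y / (a x₀ - a y)) Ω := by
    intro u x hx
    have h1c : Continuous fun y => K x y := hKcont.comp (Continuous.prodMk_right x)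
    have h1 : AEStronglyMeasurable (fun y => K x y) (volume.restrict Ω) :=
      h1c.aestronglyMeasurable
    have h2 : AEStronglyMeasurable (extFun (closure Ω) u) (volume.restrict Ω) :=
      ((extFun_continuousOn (closure Ω) u).mono subset_closure).aestronglyMeasurable hop.measurableSet
    have h3 : AEStronglyMeasurable (fun y => (a x₀ - a y)⁻¹) (volume.restrict Ω) :=
      hinv.aestronglyMeasurable
    have hsm : AEStronglyMeasurable (fun y => K x y * extFun (closure Ω) u y / (a x₀ - a y))
        (volume.restrict Ω) := by
      simp only [div_eq_mul_inv]
      exact (h1.mul h2).mul h3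
    have hdom : IntegrableOn (fun y => MK * ‖u‖ * |(a x₀ - a y)⁻¹|) Ω :=
      hIint.const_mul (MK * ‖u‖)
    apply Integrable.mono' hdom hsm
    filter_upwards [ae_restrict_mem hop.measurableSet] with y hy
    rw [Real.norm_eq_abs, div_eq_mul_inv, abs_mul, abs_mul]
    apply mul_le_mul _ le_rfl (abs_nonneg _) (by positivity)
    apply mul_le_mul (hKb x hx y (subset_closure hy)) (extFun_abs_le (closure Ω) u y)
      (abs_nonneg _) hMKnn
  -- key uniform estimate
  have hkey : ∀ (u : ↥(closure Ω) →ᵇ ℝ) (x x' : EuclideanSpace ℝ (Fin n)), x ∈ (closure Ω) → x' ∈ (closure Ω) → ∀ η : ℝ, 0 ≤ η →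
      (∀ y ∈ (closure Ω), |K x y - K x' y| ≤ η) →
      |(∫ y in Ω, K x y * extFun (closure Ω) u y / (a x₀ - a y)) -
        ∫ y in Ω, K x' y * extFun (closure Ω) u y / (a x₀ - a y)| ≤ η * ‖u‖ * I := by
    intro u x x' hx hx' η hη hb
    rw [← integral_sub (hint u x hx) (hint u x' hx')]
    have hae : ∀ᵐ y ∂(volume.restrict Ω),
        ‖K x y * extFun (closure Ω) u y / (a x₀ - a y) - K x' y * extFun (closure Ω) u y / (a x₀ - a y)‖ ≤
          η * ‖u‖ * |(a x₀ - a y)⁻¹| := by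
      filter_upwards [ae_restrict_mem hop.measurableSet] with y hy
      have heq : K x y * extFun (closure Ω) u y / (a x₀ - a y) - K x' y * extFun (closure Ω) u y / (a x₀ - a y) =
          (K x y - K x' y) * extFun (closure Ω) u y * (a x₀ - a y)⁻¹ := by
        rw [div_eq_mul_inv, div_eq_mul_inv]
        ring
      rw [heq, Real.norm_eq_abs, abs_mul, abs_mul]
      apply mul_le_mul _ le_rfl (abs_nonneg _) (by positivity)
      apply mul_le_mul (hb y (subset_closure hy)) (extFun_abs_le (closure Ω) u y) (abs_nonneg _) hη
    have hdom : IntegrableOn (fun y => η * ‖u‖ * |(a x₀ - a y)⁻¹|) Ω :=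
      hIint.const_mul (η * ‖u‖)
    have h5 := norm_integral_le_of_norm_le hdom hae
    rw [Real.norm_eq_abs] at h5
    calc |∫ y in Ω, (K x y * extFun (closure Ω) u y / (a x₀ - a y) -
            K x' y * extFun (closure Ω) u y / (a x₀ - a y))|
        ≤ ∫ y in Ω, η * ‖u‖ * |(a x₀ - a y)⁻¹| := h5
      _ = η * ‖u‖ * I := by rw [integral_const_mul]
  -- modulus of continuity for K
  have hmod : ∀ η : ℝ, 0 < η → ∃ δ > (0:ℝ), ∀ x ∈ (closure Ω), ∀ x' ∈ (closure Ω), dist x x' < δ →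
      ∀ y ∈ (closure Ω), |K x y - K x' y| ≤ η := by
    intro η hη
    have hunif := (hQcomp.prod hQcomp).uniformContinuousOn_of_continuous hKcont.continuousOn
    rw [Metric.uniformContinuousOn_iff] at hunif
    obtain ⟨δ, hδ, h⟩ := hunif η hη
    refine ⟨δ, hδ, fun x hx x' hx' hxx' y hy => ?_⟩
    have hd : dist ((x, y) : EuclideanSpace ℝ (Fin n) × EuclideanSpace ℝ (Fin n)) ((x', y) : EuclideanSpace ℝ (Fin n) × EuclideanSpace ℝ (Fin n)) < δ := by
      rw [Prod.dist_eq, dist_self]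
      rw [max_eq_left dist_nonneg]
      exact hxx'
    have := h (x, y) ⟨hx, hy⟩ (x', y) ⟨hx', hy⟩ hd
    rw [Real.dist_eq] at this
    exact this.le
  -- the function
  set g : (↥(closure Ω) →ᵇ ℝ) → ↥(closure Ω) → ℝ := fun u x => ∫ y in Ω, K (x : EuclideanSpace ℝ (Fin n)) y * extFun (closure Ω) u y / (a x₀ - a y)
    with hgdef
  have hgb : ∀ (u : ↥(closure Ω) →ᵇ ℝ) (x : ↥(closure Ω)), ‖g u x‖ ≤ MK * ‖u‖ * I := by
    intro u x
    have hae : ∀ᵐ y ∂(volume.restrict Ω),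
        ‖K (x : EuclideanSpace ℝ (Fin n)) y * extFun (closure Ω) u y / (a x₀ - a y)‖ ≤ MK * ‖u‖ * |(a x₀ - a y)⁻¹| := by
      filter_upwards [ae_restrict_mem hop.measurableSet] with y hy
      rw [Real.norm_eq_abs, div_eq_mul_inv, abs_mul, abs_mul]
      apply mul_le_mul _ le_rfl (abs_nonneg _) (by positivity)
      apply mul_le_mul (hKb _ x.2 y (subset_closure hy)) (extFun_abs_le (closure Ω) u y)
        (abs_nonneg _) hMKnn
    have hdom : IntegrableOn (fun y => MK * ‖u‖ * |(a x₀ - a y)⁻¹|) Ω :=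
      hIint.const_mul (MK * ‖u‖)
    have h5 := norm_integral_le_of_norm_le hdom hae
    calc ‖g u x‖ ≤ ∫ y in Ω, MK * ‖u‖ * |(a x₀ - a y)⁻¹| := h5
      _ = MK * ‖u‖ * I := by rw [integral_const_mul]
  have hgc : ∀ u : ↥(closure Ω) →ᵇ ℝ, Continuous (g u) := by
    intro u
    rw [Metric.continuous_iff]
    intro x ε hε
    have hpos : (0:ℝ) < ‖u‖ * I + 1 := by positivity
    set η := ε / (‖u‖ * I + 1) with hηdef
    have hηpos : 0 < η := by positivity
    obtain ⟨δ, hδ, hm⟩ := hmod η hηpos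
    refine ⟨δ, hδ, fun x' hx' => ?_⟩
    rw [Real.dist_eq]
    have hdq : dist (↑x' : EuclideanSpace ℝ (Fin n)) (↑x : EuclideanSpace ℝ (Fin n)) < δ := by
      rw [← Subtype.dist_eq]
      exact hx'
    have hb := hkey u (↑x') (↑x) x'.2 x.2 η hηpos.le (hm (↑x') x'.2 (↑x) x.2 hdq)
    calc |g u x' - g u x| ≤ η * ‖u‖ * I := hb
      _ = η * (‖u‖ * I) := by ring
      _ < η * (‖u‖ * I + 1) := by
          exact mul_lt_mul_of_pos_left (lt_add_one _) hηpos
      _ = ε := by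
          rw [hηdef, div_mul_cancel₀ _ hpos.ne']
  -- the bounded continuous function
  set Tb : (↥(closure Ω) →ᵇ ℝ) → (↥(closure Ω) →ᵇ ℝ) := fun u =>
    BoundedContinuousFunction.ofNormedAddCommGroup (g u) (hgc u) (MK * ‖u‖ * I) (hgb u)
    with hTbdef
  have hTb_apply : ∀ (u : ↥(closure Ω) →ᵇ ℝ) (x : ↥(closure Ω)), Tb u x = g u x := fun u x => rfl
  -- linearity
  set Tlin : (↥(closure Ω) →ᵇ ℝ) →ₗ[ℝ] (↥(closure Ω) →ᵇ ℝ) :=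
    { toFun := Tb
      map_add' := by
        intro u v
        apply BoundedContinuousFunction.ext
        intro x
        rw [BoundedContinuousFunction.add_apply, hTb_apply, hTb_apply, hTb_apply, hgdef]
        simp only
        have heq : ∀ y : EuclideanSpace ℝ (Fin n), K (x : EuclideanSpace ℝ (Fin n)) y * extFun (closure Ω) (u + v) y / (a x₀ - a y) =
            K (x : EuclideanSpace ℝ (Fin n)) y * extFun (closure Ω) u y / (a x₀ - a y) + K (x : EuclideanSpace ℝ (Fin n)) y * extFun (closure Ω) v y / (a x₀ - a y) := by
          intro y
          rw [extFun_add]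
          ring
        rw [integral_congr_ae (Eventually.of_forall fun y => heq y)]
        exact integral_add (hint u (↑x) x.2) (hint v (↑x) x.2)
      map_smul' := by
        intro c u
        apply BoundedContinuousFunction.ext
        intro x
        rw [BoundedContinuousFunction.smul_apply, hTb_apply, hTb_apply, hgdef]
        simp only [RingHom.id_apply]
        have heq : ∀ y : EuclideanSpace ℝ (Fin n), K (x : EuclideanSpace ℝ (Fin n)) y * extFun (closure Ω) (c • u) y / (a x₀ - a y) =
            c * (K (x : EuclideanSpace ℝ (Fin n)) y * extFun (closure Ω) u y / (a x₀ - a y)) := by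
          intro y
          rw [extFun_smul]
          ring
        rw [integral_congr_ae (Eventually.of_forall fun y => heq y)]
        rw [integral_const_mul]
        rfl } with hTlindef
  have hTlin_norm : ∀ u : ↥(closure Ω) →ᵇ ℝ, ‖Tlin u‖ ≤ MK * I * ‖u‖ := by
    intro u
    apply (BoundedContinuousFunction.norm_le (by positivity)).2
    intro x
    calc ‖Tlin u x‖ = ‖g u x‖ := by rw [hTlindef]; rfl
      _ ≤ MK * ‖u‖ * I := hgb u x
      _ = MK * I * ‖u‖ := by ring
  set T : (↥(closure Ω) →ᵇ ℝ) →L[ℝ] (↥(closure Ω) →ᵇ ℝ) := Tlin.mkContinuous (MK * I) hTlin_norm with hTdef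
  have hT_apply : ∀ (u : ↥(closure Ω) →ᵇ ℝ) (x : ↥(closure Ω)),
      T u x = ∫ y in Ω, K (x : EuclideanSpace ℝ (Fin n)) y * extFun (closure Ω) u y / (a x₀ - a y) := fun u x => rfl
  -- compactness
  have hcomp : IsCompactOperator ⇑T := by
    have hball : IsCompact (closure (⇑T '' closedBall 0 1)) := by
      apply BoundedContinuousFunction.arzela_ascoli (Icc (-(MK * I)) (MK * I)) isCompact_Icc
      · rintro f x ⟨u, hu, rfl⟩
        rw [mem_closedBall_zero_iff] at hu
        have h1 : ‖T u x‖ ≤ MK * ‖u‖ * I := hgb u x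
        have h2 : MK * ‖u‖ * I ≤ MK * I := by nlinarith [mul_nonneg (mul_nonneg hMKnn hI0) (sub_nonneg.2 hu)]
        have h3 := abs_le.1 (le_trans (le_of_eq (Real.norm_eq_abs _).symm) (le_trans h1 h2))
        exact mem_Icc.2 h3
      · intro x
        rw [Metric.equicontinuousAt_iff]
        intro ε hε
        have hpos : (0:ℝ) < I + 1 := by linarith
        have hηpos : 0 < ε / (I + 1) := by positivity
        obtain ⟨δ, hδ, hm⟩ := hmod (ε / (I + 1)) hηpos
        refine ⟨δ, hδ, fun x' hx' i => ?_⟩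
        obtain ⟨u, hu, hi⟩ := i.2
        rw [mem_closedBall_zero_iff] at hu
        have hdq : dist (↑x : EuclideanSpace ℝ (Fin n)) (↑x' : EuclideanSpace ℝ (Fin n)) < δ := by
          rw [← Subtype.dist_eq, dist_comm]
          exact hx'
        have hb := hkey u (↑x) (↑x') x.2 x'.2 (ε / (I + 1)) hηpos.le
          (hm (↑x) x.2 (↑x') x'.2 hdq)
        have happ : ∀ z : ↥(closure Ω), (i : ↥(closure Ω) →ᵇ ℝ) z = T u z := by
          intro z
          rw [hi]
        rw [Real.dist_eq, happ x, happ x', hT_apply, hT_apply]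
        calc |(∫ y in Ω, K (↑x : EuclideanSpace ℝ (Fin n)) y * extFun (closure Ω) u y / (a x₀ - a y)) -
              ∫ y in Ω, K (↑x' : EuclideanSpace ℝ (Fin n)) y * extFun (closure Ω) u y / (a x₀ - a y)|
            ≤ ε / (I + 1) * ‖u‖ * I := hb
          _ ≤ ε / (I + 1) * I := by nlinarith [mul_nonneg (mul_nonneg hηpos.le hI0) (sub_nonneg.2 hu)]
          _ < ε / (I + 1) * (I + 1) := by
              exact mul_lt_mul_of_pos_left (lt_add_one _) hηpos
          _ = ε := by field_simp
    have hball' : IsCompact (closure (⇑(T : (↥(closure Ω) →ᵇ ℝ) →ₗ[ℝ] (↥(closure Ω) →ᵇ ℝ)) ''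
        closedBall 0 1)) := by
      simpa using hball
    have := (isCompactOperator_iff_isCompact_closure_image_closedBall
      (f := (T : (↥(closure Ω) →ᵇ ℝ) →ₗ[ℝ] (↥(closure Ω) →ᵇ ℝ))) one_pos).2 hball'
    simpa using this
  refine ⟨T, ?_, hcomp, ?_⟩
  · intro u x
    exact hT_apply u x
  · intro l hl hl0
    exact ⟨compact_spectrum_eigen hcomp hl hl0, compact_spectrum_isolated hcomp hl0⟩
end

section
/- Let Ω = B₁(0) ⊂ ℝ³, a(x) = 1 − ‖x‖², and ρ > 1/(4π). Then there exist λ_p < −1 and φ_p ∈ C(Ω̄) with φ_p > 0 on Ω̄ such that ρ∫_Ω φ_p(y) dy + (a(x) + λ_p) φ_p(x) = 0 for all x ∈ Ω̄. Explicitly, there is a unique λ_p < −1 with ρ ∫_Ω dx/(−λ_p − a(x)) = 1, and φ_p(x) = ρ/(−λ_p − a(x)) is such a solution (with ∫_Ω φ_p = 1). -/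
open MeasureTheory Set Metric Real intervalIntegral

theorem vol3 : (volume (ball (0 : EuclideanSpace ℝ (Fin 3)) 1)).toReal = 4/3 * π := by
  rw [EuclideanSpace.volume_ball]
  have h52 : Real.Gamma ((Fintype.card (Fin 3) : ℝ)/2 + 1) = 3/4 * Real.sqrt π := by
    norm_num
    rw [show (5:ℝ)/2 = (1/2 + 1) + 1 by ring, Real.Gamma_add_one (by norm_num),
      Real.Gamma_add_one (by norm_num), Real.Gamma_one_half_eq]
    ring
  rw [h52]
  have hs : Real.sqrt π > 0 := Real.sqrt_pos.mpr Real.pi_pos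
  have h3 : Real.sqrt π ^ Fintype.card (Fin 3) = π * Real.sqrt π := by
    rw [show Fintype.card (Fin 3) = 3 by norm_num, pow_succ, Real.sq_sqrt Real.pi_pos.le]
  rw [h3, ENNReal.toReal_mul, ENNReal.toReal_ofReal (by positivity), ENNReal.toReal_pow,
    ENNReal.toReal_ofReal one_pos.le]
  field_simp
  ring

theorem Jval' {c : ℝ} (hc : 0 < c) :
    (∫ y in (0:ℝ)..1, y^2/(c+y^2)) = 1 - Real.sqrt c * Real.arctan (1/Real.sqrt c) := by
  have hs : 0 < Real.sqrt c := Real.sqrt_pos.mpr hc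
  have hcy : ∀ y : ℝ, 0 < c + y^2 := fun y => by positivity
  have key : ∀ y : ℝ, y^2/(c+y^2) = 1 - (fun u => 1/(1+u^2)) (y / Real.sqrt c) := by
    intro y
    have h : 1 + (y / Real.sqrt c)^2 = (c + y^2)/c := by
      rw [div_pow, Real.sq_sqrt hc.le]
      field_simp
    simp only [h]
    rw [one_div_div]
    field_simp
    ring
  simp_rw [key]
  have h1 : IntervalIntegrable (fun _ : ℝ => (1:ℝ)) volume 0 1 := intervalIntegrable_const
  have h2 : IntervalIntegrable (fun y : ℝ => (fun u => 1/(1+u^2)) (y / Real.sqrt c)) volume 0 1 := by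
    apply Continuous.intervalIntegrable
    apply Continuous.div continuous_const
    · continuity
    · intro x; positivity
  rw [intervalIntegral.integral_sub h1 h2, intervalIntegral.integral_const,
    intervalIntegral.integral_comp_div (fun u => 1/(1+u^2)) hs.ne']
  simp [integral_one_div_one_add_sq, Real.arctan_zero, smul_eq_mul]

theorem Ival' {c : ℝ} (hc : 0 < c) :
    (∫ x in ball (0 : EuclideanSpace ℝ (Fin 3)) 1, 1/(c + ‖x‖^2)) =
      4 * π * (1 - Real.sqrt c * Real.arctan (1/Real.sqrt c)) := by
  classical
  set f : ℝ → ℝ := Set.indicator (Iio 1) (fun r => 1/(c+r^2)) with hf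
  have e1 : (∫ x in ball (0 : EuclideanSpace ℝ (Fin 3)) 1, 1/(c + ‖x‖^2)) = ∫ x : EuclideanSpace ℝ (Fin 3), f ‖x‖ := by
    rw [← MeasureTheory.integral_indicator measurableSet_ball]
    congr 1
    funext x
    by_cases h : x ∈ ball (0 : EuclideanSpace ℝ (Fin 3)) 1
    · rw [Set.indicator_of_mem h, hf, Set.indicator_of_mem (by simpa [mem_ball_zero_iff] using h)]
    · rw [Set.indicator_of_notMem h, hf, Set.indicator_of_notMem (by simpa [mem_ball_zero_iff] using h)]
  rw [e1, MeasureTheory.integral_fun_norm_addHaar volume f]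
  have hdim : Module.finrank ℝ (EuclideanSpace ℝ (Fin 3)) = 3 := by
    simp [finrank_euclideanSpace]
  rw [hdim]
  have hvol : (volume (ball (0 : EuclideanSpace ℝ (Fin 3)) 1)).toReal = 4/3 * π := vol3
  rw [measureReal_def, hvol]
  have e2 : (∫ y in Ioi (0:ℝ), y ^ (3-1) • f y) = ∫ y in (0:ℝ)..1, y^2/(c+y^2) := by
    have : ∀ y : ℝ, y ^ (3-1) • f y = Set.indicator (Iio 1) (fun y => y^2/(c+y^2)) y := by
      intro y
      rw [hf]
      simp only [Set.indicator_apply]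
      split <;> simp [div_eq_mul_inv, mul_comm] <;> ring
    simp_rw [this]
    rw [setIntegral_indicator measurableSet_Iio]
    have : Ioi (0:ℝ) ∩ Iio 1 = Ioo 0 1 := by ext y; simp [mem_Ioo, and_comm]
    rw [this, intervalIntegral.integral_of_le zero_le_one, integral_Ioc_eq_integral_Ioo]
  rw [e2, Jval' hc]
  simp only [nsmul_eq_mul, smul_eq_mul]
  ring

theorem Jmono' {c₁ c₂ : ℝ} (h1 : 0 < c₁) (h12 : c₁ < c₂) :
    (∫ y in (0:ℝ)..1, y^2/(c₂+y^2)) < ∫ y in (0:ℝ)..1, y^2/(c₁+y^2) := by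
  apply intervalIntegral.integral_lt_integral_of_continuousOn_of_le_of_exists_lt one_pos
  · apply Continuous.continuousOn
    apply Continuous.div (by continuity) (by continuity)
    intro y; nlinarith [sq_nonneg y]
  · apply Continuous.continuousOn
    apply Continuous.div (by continuity) (by continuity)
    intro y; nlinarith [sq_nonneg y]
  · intro y hy
    have hy2 : (0:ℝ) ≤ y^2 := sq_nonneg y
    gcongr <;> nlinarith
  · refine ⟨1, by norm_num, ?_⟩
    norm_num
    have := div_lt_div_of_pos_left one_pos (show (0:ℝ) < c₁+1 by linarith) (show c₁+1 < c₂+1 by linarith)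
    rw [← one_div, ← one_div]
    exact this

theorem Jbound' {c : ℝ} (hc : 0 < c) :
    1 - Real.sqrt c * Real.arctan (1/Real.sqrt c) ≤ 1/(3*c) := by
  rw [← Jval' hc]
  have h : (∫ y in (0:ℝ)..1, y^2/(c+y^2)) ≤ ∫ y in (0:ℝ)..1, y^2/c := by
    apply intervalIntegral.integral_mono_on zero_le_one
    · apply Continuous.intervalIntegrable
      apply Continuous.div (by continuity) (by continuity)
      intro y; positivity
    · have : Continuous (fun y : ℝ => y^2/c) := by continuity
      exact this.intervalIntegrable 0 1
    · intro y hy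
      have hy2 : (0:ℝ) ≤ y^2 := sq_nonneg y
      gcongr <;> nlinarith
  calc (∫ y in (0:ℝ)..1, y^2/(c+y^2)) ≤ ∫ y in (0:ℝ)..1, y^2/c := h
    _ = 1/(3*c) := by
        simp_rw [div_eq_mul_inv, intervalIntegral.integral_mul_const, integral_pow]
        norm_num
        ring

/-- For `Ω = B₁(0) ⊂ ℝ³`, `a(x) = 1 - ‖x‖²` and `ρ > 1/(4π)`, there is a unique
`λ_p < -1` with `ρ∫_Ω dx/(-λ_p - a(x)) = 1`, and then `φ_p = ρ/(-λ_p - a)` is a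
positive continuous eigenfunction: `ρ∫_Ω φ_p + (a + λ_p)φ_p = 0` on `Ω̄`. -/
theorem stmt12 (ρ : ℝ) (hρ : 1 / (4 * Real.pi) < ρ) :
    (∃! l : ℝ, l < -1 ∧
      ρ * (∫ x in ball (0 : EuclideanSpace ℝ (Fin 3)) 1, 1 / (-l - (1 - ‖x‖ ^ 2))) = 1) ∧
    ∀ l : ℝ, l < -1 →
      ρ * (∫ x in ball (0 : EuclideanSpace ℝ (Fin 3)) 1, 1 / (-l - (1 - ‖x‖ ^ 2))) = 1 →
      ContinuousOn (fun x : EuclideanSpace ℝ (Fin 3) => ρ / (-l - (1 - ‖x‖ ^ 2)))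
        (closure (ball (0 : EuclideanSpace ℝ (Fin 3)) 1)) ∧
      (∀ x ∈ closure (ball (0 : EuclideanSpace ℝ (Fin 3)) 1),
        0 < ρ / (-l - (1 - ‖x‖ ^ 2))) ∧
      (∫ x in ball (0 : EuclideanSpace ℝ (Fin 3)) 1, ρ / (-l - (1 - ‖x‖ ^ 2))) = 1 ∧
      ∀ x ∈ closure (ball (0 : EuclideanSpace ℝ (Fin 3)) 1),
        ρ * (∫ y in ball (0 : EuclideanSpace ℝ (Fin 3)) 1, ρ / (-l - (1 - ‖y‖ ^ 2))) +
          ((1 - ‖x‖ ^ 2) + l) * (ρ / (-l - (1 - ‖x‖ ^ 2))) = 0 := by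
  have hπ : (0:ℝ) < π := Real.pi_pos
  have hρ0 : 0 < ρ := lt_trans (by positivity) hρ
  have h4πρ : (1:ℝ) < 4*π*ρ := by
    rw [div_lt_iff₀ (by positivity)] at hρ
    nlinarith
  set Φ : ℝ → ℝ := fun l =>
    ρ * (∫ x in ball (0 : EuclideanSpace ℝ (Fin 3)) 1, 1 / (-l - (1 - ‖x‖ ^ 2))) with hΦ
  have hbridge : ∀ l : ℝ, l < -1 →
      Φ l = ρ * (4 * π * (1 - Real.sqrt (-l-1) * Real.arctan (1/Real.sqrt (-l-1)))) := by
    intro l hl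
    rw [hΦ]
    simp only
    rw [show (fun x : EuclideanSpace ℝ (Fin 3) => 1 / (-l - (1 - ‖x‖ ^ 2))) =
        (fun x : EuclideanSpace ℝ (Fin 3) => 1 / ((-l-1) + ‖x‖ ^ 2)) from
      funext fun x => by ring_nf]
    rw [Ival' (by linarith : (0:ℝ) < -l-1)]
  have hmono : StrictMonoOn Φ (Iio (-1 : ℝ)) := by
    intro l₁ hl₁ l₂ hl₂ h12
    simp only [mem_Iio] at hl₁ hl₂
    rw [hbridge l₁ hl₁, hbridge l₂ hl₂,
      ← Jval' (by linarith : (0:ℝ) < -l₁-1), ← Jval' (by linarith : (0:ℝ) < -l₂-1)]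
    have := Jmono' (by linarith : (0:ℝ) < -l₂-1) (by linarith : -l₂-1 < -l₁-1)
    gcongr
  -- endpoints
  set ε : ℝ := (4*π*ρ - 1)/(4*π*ρ*π) with hε
  have hε0 : 0 < ε := by apply div_pos <;> nlinarith
  set clo : ℝ := 4*π*ρ + ε^2 with hclo
  have hεeq : ε * (4*π*ρ*π) = 4*π*ρ - 1 := by
    rw [hε]; field_simp
  have hclo0 : 0 < clo := by positivity
  have hlohi : -1 - clo < -1 - ε^2 := by nlinarith
  have hhi : 1 < Φ (-1 - ε^2) := by
    rw [hbridge _ (by nlinarith)]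
    have h1 : -(-1 - ε^2) - 1 = ε^2 := by ring
    rw [h1, Real.sqrt_sq hε0.le]
    have hA2 : Real.arctan (1/ε) < π/2 := Real.arctan_lt_pi_div_two _
    have hA0 : 0 < Real.arctan (1/ε) := by
      have := Real.arctan_strictMono (show (0:ℝ) < 1/ε by positivity)
      simpa using this
    nlinarith [mul_lt_mul_of_pos_left hA2 hε0]
  have hlo : Φ (-1 - clo) < 1 := by
    rw [hbridge _ (by nlinarith)]
    have h1 : -(-1 - clo) - 1 = clo := by ring
    rw [h1]
    have hb := Jbound' hclo0
    have h2 : ρ * (4 * π * (1/(3*clo))) < 1 := by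
      rw [show ρ * (4 * π * (1/(3*clo))) = (4*π*ρ)/(3*clo) by ring,
        div_lt_one (by positivity)]
      nlinarith [sq_nonneg ε]
    nlinarith
  have hcont : ContinuousOn Φ (Icc (-1 - clo) (-1 - ε^2)) := by
    have hsub : Icc (-1 - clo) (-1 - ε^2) ⊆ Iio (-1 : ℝ) := by
      intro l hl
      simp only [mem_Icc] at hl
      simp only [mem_Iio]
      nlinarith [hl.2]
    have hG : ContinuousOn
        (fun l : ℝ => ρ * (4 * π * (1 - Real.sqrt (-l-1) * Real.arctan (1/Real.sqrt (-l-1)))))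
        (Iio (-1 : ℝ)) := by
      apply ContinuousOn.mul continuousOn_const
      apply ContinuousOn.mul continuousOn_const
      apply ContinuousOn.sub continuousOn_const
      apply ContinuousOn.mul
      · exact (Real.continuous_sqrt.comp (continuous_id.neg.sub continuous_const)).continuousOn
      · apply Real.continuous_arctan.comp_continuousOn
        apply ContinuousOn.div continuousOn_const
        · exact (Real.continuous_sqrt.comp (continuous_id.neg.sub continuous_const)).continuousOn
        · intro l hl
          simp only [mem_Iio] at hl
          exact (Real.sqrt_pos.mpr (by linarith)).ne'
    exact ((hG.mono hsub).congr fun l hl => hbridge l (by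
      simp only [mem_Icc] at hl; nlinarith [hl.2]))
  obtain ⟨l, hlmem, hl1⟩ := intermediate_value_Icc hlohi.le hcont ⟨hlo.le, hhi.le⟩
  simp only [mem_Icc] at hlmem
  have hllt : l < -1 := by nlinarith [hlmem.2]
  constructor
  · refine ⟨l, ⟨hllt, hl1⟩, ?_⟩
    intro y ⟨hy1, hy2⟩
    exact hmono.injOn (mem_Iio.mpr hy1) (mem_Iio.mpr hllt) (hy2.trans hl1.symm)
  · intro l' hl' heq
    have hden : ∀ x : EuclideanSpace ℝ (Fin 3), 0 < -l' - (1 - ‖x‖ ^ 2) := by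
      intro x
      have := sq_nonneg ‖x‖
      nlinarith
    have hcont2 : Continuous (fun x : EuclideanSpace ℝ (Fin 3) => ρ / (-l' - (1 - ‖x‖ ^ 2))) := by
      apply Continuous.div continuous_const (continuous_const.sub (continuous_const.sub (continuous_norm.pow 2)))
      exact fun x => (hden x).ne'
    have hint : (∫ x in ball (0 : EuclideanSpace ℝ (Fin 3)) 1, ρ / (-l' - (1 - ‖x‖ ^ 2))) = 1 := by
      simp_rw [div_eq_mul_one_div ρ]
      rw [MeasureTheory.integral_const_mul]
      exact heq
    refine ⟨hcont2.continuousOn, fun x _ => div_pos hρ0 (hden x), hint, ?_⟩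
    intro x _
    rw [hint]
    have hD := (hden x).ne'
    field_simp
    ring
end

section
/- Let Ω = B₁(0) ⊂ ℝ³, a(x) = 1 − ‖x‖², and ρ = 1/(4π). Then the function φ_p(x) = ρ/‖x‖² belongs to L¹(Ω), is positive almost everywhere, satisfies ∫_Ω φ_p = 1, and solves ρ∫_Ω φ_p(y) dy + (a(x) − 1) φ_p(x) = 0 for every x ∈ Ω \ {0}; i.e. φ_p is a positive L¹ eigenfunction associated to λ_p = −1 = −max_{Ω̄} a, and it is singular (unbounded) at x = 0. -/
open MeasureTheory Set Metric
open scoped ENNReal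

lemma lintegral_fun_norm_aux3 (g : ℝ → ℝ≥0∞) (hg : Measurable g) :
    ∫⁻ x : EuclideanSpace ℝ (Fin 3), g ‖x‖ =
      volume (ball (0 : EuclideanSpace ℝ (Fin 3)) 1) * 3 *
        ∫⁻ r in Ioi (0 : ℝ), ENNReal.ofReal (r ^ 2) * g r := by
  set E := EuclideanSpace ℝ (Fin 3)
  have hdim : Module.finrank ℝ E = 3 := by
    simp [E, finrank_euclideanSpace]
  have h5 : ∫⁻ r : Ioi (0 : ℝ), g r ∂(Measure.volumeIoiPow 2)
      = ∫⁻ r in Ioi (0 : ℝ), ENNReal.ofReal (r ^ 2) * g r := by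
    have hgm : Measurable fun r : Ioi (0 : ℝ) => g ↑r := hg.comp measurable_subtype_coe
    rw [Measure.volumeIoiPow, lintegral_withDensity_eq_lintegral_mul _
      ((measurable_subtype_coe.pow_const 2).ennreal_ofReal) hgm]
    simp only [Pi.mul_apply, Function.comp]
    exact lintegral_subtype_comap measurableSet_Ioi
      (fun r : ℝ => ENNReal.ofReal (r ^ 2) * g r)
  calc
    ∫⁻ x : E, g ‖x‖ = ∫⁻ x in ({0}ᶜ : Set E), g ‖x‖ := by
      rw [MeasureTheory.restrict_compl_singleton]
    _ = ∫⁻ x : (({0}ᶜ : Set E)), g ‖(x : E)‖ ∂((volume : Measure E).comap Subtype.val) :=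
      (lintegral_subtype_comap (measurableSet_singleton (0 : E)).compl
        (fun x : E => g ‖x‖)).symm
    _ = ∫⁻ p : sphere (0 : E) 1 × Ioi (0 : ℝ), g p.2
          ∂((volume : Measure E).toSphere.prod
              (Measure.volumeIoiPow (Module.finrank ℝ E - 1))) := by
      rw [← (Measure.measurePreserving_homeomorphUnitSphereProd
        (volume : Measure E)).lintegral_comp_emb
        (Homeomorph.measurableEmbedding _) (fun p => g p.2)]
      simp
    _ = (volume : Measure E).toSphere univ *
          ∫⁻ r : Ioi (0 : ℝ), g r ∂(Measure.volumeIoiPow (Module.finrank ℝ E - 1)) := by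
      have := lintegral_prod_mul (μ := (volume : Measure E).toSphere)
        (ν := Measure.volumeIoiPow (Module.finrank ℝ E - 1))
        (f := fun _ => (1 : ℝ≥0∞)) (g := fun r : Ioi (0:ℝ) => g r)
        aemeasurable_const ((hg.comp measurable_subtype_coe).aemeasurable)
      simpa using this
    _ = volume (ball (0 : E) 1) * 3 *
        ∫⁻ r in Ioi (0 : ℝ), ENNReal.ofReal (r ^ 2) * g r := by
      rw [Measure.toSphere_apply_univ, hdim]
      norm_num [h5]
      ring

lemma volume_ball3 :
    volume (ball (0 : EuclideanSpace ℝ (Fin 3)) 1) = ENNReal.ofReal (4 / 3 * Real.pi) := by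
  rw [EuclideanSpace.volume_ball]
  have hcard : Fintype.card (Fin 3) = 3 := by simp
  rw [hcard]
  have hg : Real.Gamma ((3 : ℝ) / 2 + 1) = 3 / 4 * Real.sqrt Real.pi := by
    rw [Real.Gamma_add_one (by norm_num)]
    have h32 : (3 : ℝ) / 2 = 1 / 2 + 1 := by norm_num
    rw [h32, Real.Gamma_add_one (by norm_num), Real.Gamma_one_half_eq]
    ring
  have hπ := Real.pi_pos
  have hs : Real.sqrt Real.pi > 0 := Real.sqrt_pos.2 hπ
  have hsq : Real.sqrt Real.pi ^ 2 = Real.pi := Real.sq_sqrt hπ.le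
  rw [show ((3:ℕ):ℝ) = 3 from by norm_num, hg]
  simp only [ENNReal.ofReal_one, one_pow, one_mul]
  congr 1
  field_simp
  nlinarith [hsq, hs]

lemma key_lintegral (ρ : ℝ) (hρ : ρ = 1 / (4 * Real.pi)) :
    ∫⁻ x in ball (0 : EuclideanSpace ℝ (Fin 3)) 1, ENNReal.ofReal (ρ / ‖x‖ ^ 2) = 1 := by
  have hπ := Real.pi_pos
  have hρpos : 0 < ρ := by rw [hρ]; positivity
  set g : ℝ → ℝ≥0∞ := fun r => if r < 1 then ENNReal.ofReal (ρ / r ^ 2) else 0 with hgdef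
  have hg : Measurable g := by
    apply Measurable.ite measurableSet_Iio _ measurable_const
    exact (measurable_const.div ((measurable_id.pow_const 2))).ennreal_ofReal
  classical
  have h1 : ∫⁻ x in ball (0 : EuclideanSpace ℝ (Fin 3)) 1, ENNReal.ofReal (ρ / ‖x‖ ^ 2)
      = ∫⁻ x : EuclideanSpace ℝ (Fin 3), g ‖x‖ := by
    rw [← lintegral_indicator measurableSet_ball _]
    refine lintegral_congr fun x => ?_
    rw [indicator_apply, mem_ball_zero_iff, hgdef]
  have h2 : ∫⁻ r in Ioi (0 : ℝ), ENNReal.ofReal (r ^ 2) * g r = ENNReal.ofReal ρ := by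
    have hcong : ∀ r ∈ Ioi (0 : ℝ), ENNReal.ofReal (r ^ 2) * g r
        = (Ioo (0 : ℝ) 1).indicator (fun _ => ENNReal.ofReal ρ) r := by
      intro r hr
      simp only [hgdef, indicator_apply, mem_Ioo, mem_Ioi] at *
      by_cases h : r < 1
      · simp only [h, if_true, hr, and_true, true_and]
        rw [← ENNReal.ofReal_mul (by positivity)]
        congr 1
        field_simp
      · simp [h, hr]
    rw [setLIntegral_congr_fun measurableSet_Ioi hcong,
      lintegral_indicator measurableSet_Ioo _, Measure.restrict_restrict measurableSet_Ioo,
      inter_eq_left.2 (fun x hx => hx.1), setLIntegral_const, Real.volume_Ioo]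
    simp
  rw [h1, lintegral_fun_norm_aux3 g hg, h2, volume_ball3,
    ← ENNReal.ofReal_ofNat, ← ENNReal.ofReal_mul (by positivity),
    ← ENNReal.ofReal_mul (by positivity), ← ENNReal.ofReal_one]
  congr 1
  rw [hρ]
  field_simp

/-- For `Ω = B₁(0) ⊂ ℝ³`, `a(x) = 1 - ‖x‖²` and `ρ = 1/(4π)`, the function
`φ_p = ρ/‖x‖²` is a positive `L¹` eigenfunction associated to `λ_p = -1`:
it is integrable, a.e. positive, of integral `1`, solves
`ρ∫_Ω φ_p + (a(x) - 1)φ_p(x) = 0` away from `0`, and is unbounded at `0`. -/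
theorem stmt13 (ρ : ℝ) (hρ : ρ = 1 / (4 * Real.pi)) :
    IntegrableOn (fun x : EuclideanSpace ℝ (Fin 3) => ρ / ‖x‖ ^ 2)
      (ball (0 : EuclideanSpace ℝ (Fin 3)) 1) ∧
    (∀ᵐ x ∂(volume.restrict (ball (0 : EuclideanSpace ℝ (Fin 3)) 1)),
      0 < ρ / ‖x‖ ^ 2) ∧
    (∫ x in ball (0 : EuclideanSpace ℝ (Fin 3)) 1, ρ / ‖x‖ ^ 2) = 1 ∧
    (∀ x ∈ ball (0 : EuclideanSpace ℝ (Fin 3)) 1, x ≠ 0 →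
      ρ * (∫ y in ball (0 : EuclideanSpace ℝ (Fin 3)) 1, ρ / ‖y‖ ^ 2) +
        ((1 - ‖x‖ ^ 2) - 1) * (ρ / ‖x‖ ^ 2) = 0) ∧
    ∀ M : ℝ, ∃ x ∈ ball (0 : EuclideanSpace ℝ (Fin 3)) 1, x ≠ 0 ∧ M < ρ / ‖x‖ ^ 2 := by
  have hπ := Real.pi_pos
  have hρpos : 0 < ρ := by rw [hρ]; positivity
  have hnn : ∀ x : EuclideanSpace ℝ (Fin 3), 0 ≤ ρ / ‖x‖ ^ 2 :=
    fun x => div_nonneg hρpos.le (by positivity)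
  have hmeas : AEStronglyMeasurable (fun x : EuclideanSpace ℝ (Fin 3) => ρ / ‖x‖ ^ 2)
      (volume.restrict (ball (0 : EuclideanSpace ℝ (Fin 3)) 1)) :=
    (measurable_const.div (measurable_norm.pow_const 2)).aestronglyMeasurable
  have hkey := key_lintegral ρ hρ
  have hintOn : IntegrableOn (fun x : EuclideanSpace ℝ (Fin 3) => ρ / ‖x‖ ^ 2)
      (ball (0 : EuclideanSpace ℝ (Fin 3)) 1) := by
    refine ⟨hmeas, ?_⟩
    rw [hasFiniteIntegral_iff_ofReal (ae_of_all _ hnn)]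
    rw [hkey]
    exact ENNReal.one_lt_top
  have hint : (∫ x in ball (0 : EuclideanSpace ℝ (Fin 3)) 1, ρ / ‖x‖ ^ 2) = 1 := by
    rw [integral_eq_lintegral_of_nonneg_ae (ae_of_all _ hnn) hmeas, hkey]
    simp
  refine ⟨hintOn, ?_, hint, ?_, ?_⟩
  · have h0 : ∀ᵐ x : EuclideanSpace ℝ (Fin 3) ∂volume, x ≠ 0 := by
      rw [ae_iff]
      simpa [not_not] using measure_singleton (0 : EuclideanSpace ℝ (Fin 3))
    filter_upwards [ae_restrict_of_ae h0] with x hx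
    exact div_pos hρpos (pow_pos (norm_pos_iff.2 hx) 2)
  · intro x hx hx0
    have hn : ‖x‖ ≠ 0 := norm_ne_zero_iff.2 hx0
    rw [hint]
    field_simp
    ring
  · intro M
    set t : ℝ := max M 1 with ht_def
    have ht : 0 < t := lt_of_lt_of_le one_pos (le_max_right M 1)
    set ε : ℝ := min (1 / 2) (Real.sqrt (ρ / (2 * t))) with hε_def
    have hε0 : 0 < ε := lt_min (by norm_num) (Real.sqrt_pos.2 (by positivity))
    have hε1 : ε < 1 := lt_of_le_of_lt (min_le_left _ _) (by norm_num)
    have hε2 : ε ^ 2 ≤ ρ / (2 * t) := by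
      have h := min_le_right (1 / 2) (Real.sqrt (ρ / (2 * t)))
      calc ε ^ 2 ≤ Real.sqrt (ρ / (2 * t)) ^ 2 := by
            exact pow_le_pow_left₀ hε0.le h 2
        _ = ρ / (2 * t) := Real.sq_sqrt (by positivity)
    have hε212 : ε ^ 2 * (2 * t) ≤ ρ := (le_div_iff₀ (by positivity)).1 hε2
    refine ⟨ε • EuclideanSpace.single (0 : Fin 3) (1 : ℝ), ?_, ?_, ?_⟩
    · rw [mem_ball_zero_iff, norm_smul, EuclideanSpace.norm_single]
      simpa [abs_of_pos hε0] using hε1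
    · exact smul_ne_zero hε0.ne' (by
        intro h
        have := congrArg (‖·‖) h
        simp [EuclideanSpace.norm_single] at this)
    · have hnorm : ‖ε • EuclideanSpace.single (0 : Fin 3) (1 : ℝ)‖ = ε := by
        rw [norm_smul, EuclideanSpace.norm_single]
        simp [Real.norm_eq_abs, abs_of_pos hε0]
      rw [hnorm]
      have hMt : M ≤ t := le_max_left M 1
      have h2 : 2 * t ≤ ρ / ε ^ 2 := by
        rw [le_div_iff₀ (pow_pos hε0 2)]
        nlinarith
      nlinarith
end

section
/- Let Ω = B₁(0) ⊂ ℝ³, a(x) = 1 − ‖x‖², 0 < ρ < 1/(4π), and set α = 1/ρ − 4π > 0. Then the positive Borel measure μ := α δ₀ + (1/‖x‖²) dx on Ω̄ solves the spectral problem at λ_p = −1: for every Borel set A ⊆ Ω̄, ρ μ(Ω̄) · Leb(A ∩ Ω) = ∫_A ‖x‖² dμ(x). -/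
open MeasureTheory Set Metric

open scoped NNReal ENNReal

local notation "E3" => EuclideanSpace ℝ (Fin 3)

lemma vol3_s15 : volume (ball (0 : E3) 1) = ENNReal.ofReal (4 * Real.pi / 3) := by
  rw [EuclideanSpace.volume_ball]
  have h32 : ((3:ℝ)/2) ≠ 0 := by norm_num
  have h12 : ((1:ℝ)/2) ≠ 0 := by norm_num
  have hG : Real.Gamma ((Fintype.card (Fin 3) : ℝ) / 2 + 1) = 3 * Real.sqrt Real.pi / 4 := by
    have e1 : ((Fintype.card (Fin 3) : ℝ) / 2 + 1) = (3:ℝ)/2 + 1 := by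
      simp [Fintype.card_fin]
    rw [e1, Real.Gamma_add_one h32]
    have e2 : ((3:ℝ)/2) = (1:ℝ)/2 + 1 := by norm_num
    rw [e2, Real.Gamma_add_one h12]
    rw [Real.Gamma_one_half_eq]
    ring
  rw [hG, Fintype.card_fin]
  have hsq : Real.sqrt Real.pi ^ 3 = Real.pi * Real.sqrt Real.pi := by
    have : Real.sqrt Real.pi ^ 2 = Real.pi := Real.sq_sqrt Real.pi_pos.le
    calc Real.sqrt Real.pi ^ 3 = Real.sqrt Real.pi ^ 2 * Real.sqrt Real.pi := by ring
    _ = Real.pi * Real.sqrt Real.pi := by rw [this]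
  have hs : (0:ℝ) < Real.sqrt Real.pi := Real.sqrt_pos.2 Real.pi_pos
  rw [hsq]
  rw [ENNReal.ofReal_one, one_pow, one_mul]
  congr 1
  field_simp

lemma lint3 : ∫⁻ x in ball (0 : E3) 1, ENNReal.ofReal (1 / ‖x‖ ^ 2)
    = ENNReal.ofReal (4 * Real.pi) := by
  classical
  set g : ℝ → ℝ≥0∞ := fun y => Set.indicator (Set.Iio 1) (fun y => ENNReal.ofReal (1 / y ^ 2)) y
    with hgdef
  have hgmeas : Measurable g := by
    apply Measurable.indicator _ measurableSet_Iio
    measurability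
  have step1 : ∫⁻ x in ball (0 : E3) 1, ENNReal.ofReal (1 / ‖x‖ ^ 2)
      = ∫⁻ x : E3, g ‖x‖ := by
    rw [← lintegral_indicator measurableSet_ball]
    congr 1
    funext x
    by_cases hx : x ∈ ball (0 : E3) 1
    · have hx' : ‖x‖ ∈ Set.Iio (1:ℝ) := by
        rw [Set.mem_Iio]; rwa [mem_ball_zero_iff] at hx
      simp [hgdef, Set.indicator_of_mem, hx, hx']
    · have hx' : ‖x‖ ∉ Set.Iio (1:ℝ) := by
        rw [Set.mem_Iio]; rwa [mem_ball_zero_iff] at hx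
      simp [hgdef, Set.indicator_of_notMem, hx, hx']
  have step2 : ∫⁻ x : E3, g ‖x‖
      = ∫⁻ x : ({0}ᶜ : Set E3), g ‖(x : E3)‖ ∂((volume : Measure E3).comap Subtype.val) := by
    rw [lintegral_subtype_comap (measurableSet_singleton (0:E3)).compl
      (fun x : E3 => g ‖x‖), MeasureTheory.restrict_compl_singleton]
  have hFmeas : Measurable (fun z : sphere (0:E3) 1 × Set.Ioi (0:ℝ) => g (z.2 : ℝ)) :=
    hgmeas.comp (measurable_subtype_coe.comp measurable_snd)
  have step3 : ∫⁻ x : ({0}ᶜ : Set E3), g ‖(x : E3)‖ ∂((volume : Measure E3).comap Subtype.val)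
      = ∫⁻ z : sphere (0:E3) 1 × Set.Ioi (0:ℝ), g (z.2 : ℝ)
        ∂((volume : Measure E3).toSphere.prod
          (MeasureTheory.Measure.volumeIoiPow (Module.finrank ℝ E3 - 1))) := by
    rw [← (volume : Measure E3).measurePreserving_homeomorphUnitSphereProd.lintegral_comp hFmeas]
    refine lintegral_congr fun x => ?_
    rw [homeomorphUnitSphereProd_apply_snd_coe]
  have step4 : ∫⁻ z : sphere (0:E3) 1 × Set.Ioi (0:ℝ), g (z.2 : ℝ)
        ∂((volume : Measure E3).toSphere.prod
          (MeasureTheory.Measure.volumeIoiPow (Module.finrank ℝ E3 - 1)))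
      = ((volume : Measure E3).toSphere Set.univ) *
          ∫⁻ y : Set.Ioi (0:ℝ), g (y : ℝ)
            ∂(MeasureTheory.Measure.volumeIoiPow (Module.finrank ℝ E3 - 1)) := by
    rw [lintegral_prod _ hFmeas.aemeasurable]
    simp [lintegral_const, mul_comm]
  have hdim : Module.finrank ℝ E3 = 3 := finrank_euclideanSpace_fin
  have step5 : ∫⁻ y : Set.Ioi (0:ℝ), g (y : ℝ)
      ∂(MeasureTheory.Measure.volumeIoiPow (Module.finrank ℝ E3 - 1))
      = ∫⁻ y in Set.Ioi (0:ℝ), ENNReal.ofReal (y ^ 2) * g y := by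
    rw [hdim]
    rw [MeasureTheory.Measure.volumeIoiPow]
    refine (lintegral_withDensity_eq_lintegral_mul _
      ((measurable_subtype_coe.pow_const _).ennreal_ofReal)
      (hgmeas.comp measurable_subtype_coe)).trans ?_
    exact lintegral_subtype_comap measurableSet_Ioi
      (fun y : ℝ => ENNReal.ofReal (y ^ 2) * g y)
  have step6 : ∫⁻ y in Set.Ioi (0:ℝ), ENNReal.ofReal (y ^ 2) * g y = 1 := by
    have heq : ∀ y : ℝ, ENNReal.ofReal (y ^ 2) * g y
        = Set.indicator (Set.Iio 1)
            (fun y => ENNReal.ofReal (y ^ 2) * ENNReal.ofReal (1 / y ^ 2)) y := by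
      intro y
      by_cases hy : y ∈ Set.Iio (1:ℝ) <;>
        simp [hgdef, Set.indicator_of_mem, Set.indicator_of_notMem, hy]
    simp_rw [heq]
    rw [lintegral_indicator measurableSet_Iio, Measure.restrict_restrict measurableSet_Iio,
      Set.Iio_inter_Ioi]
    rw [setLIntegral_congr_fun measurableSet_Ioo
      (fun y hy => ?_), setLIntegral_one, Real.volume_Ioo]
    · norm_num
    · rw [← ENNReal.ofReal_mul (sq_nonneg y)]
      rw [show y ^ 2 * (1 / y ^ 2) = 1 by field_simp [ne_of_gt hy.1]]
      simp
  rw [step1, step2, step3, step4, step5, step6, mul_one,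
    MeasureTheory.Measure.toSphere_apply_univ, hdim, vol3_s15]
  rw [show ((3:ℕ) : ℝ≥0∞) = ENNReal.ofReal (3:ℝ) by simp,
    ← ENNReal.ofReal_mul (by norm_num)]
  congr 1
  ring


private theorem stmt15_aux (ρ α : ℝ) (hρ0 : 0 < ρ) (hρ : ρ < 1 / (4 * Real.pi))
    (hα : α = 1 / ρ - 4 * Real.pi)
    (vol3_s15 : volume (ball (0 : E3) 1) = ENNReal.ofReal (4 * Real.pi / 3))
    (lint3 : ∫⁻ x in ball (0 : E3) 1, ENNReal.ofReal (1 / ‖x‖ ^ 2)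
      = ENNReal.ofReal (4 * Real.pi)) :
    0 < α ∧
    ∀ A : Set (EuclideanSpace ℝ (Fin 3)), MeasurableSet A →
      A ⊆ closure (ball (0 : EuclideanSpace ℝ (Fin 3)) 1) →
      ρ * ((ENNReal.ofReal α • Measure.dirac (0 : EuclideanSpace ℝ (Fin 3)) +
            (volume.restrict (ball (0 : EuclideanSpace ℝ (Fin 3)) 1)).withDensity
              (fun x => ENNReal.ofReal (1 / ‖x‖ ^ 2)))
            (closure (ball (0 : EuclideanSpace ℝ (Fin 3)) 1))).toReal *
          (volume (A ∩ ball (0 : EuclideanSpace ℝ (Fin 3)) 1)).toReal =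
        ∫ x in A, ‖x‖ ^ 2
          ∂(ENNReal.ofReal α • Measure.dirac (0 : EuclideanSpace ℝ (Fin 3)) +
            (volume.restrict (ball (0 : EuclideanSpace ℝ (Fin 3)) 1)).withDensity
              (fun x => ENNReal.ofReal (1 / ‖x‖ ^ 2))) := by
  classical
  have hπ : (0:ℝ) < 4 * Real.pi := by positivity
  have h4 : 4 * Real.pi < 1 / ρ := by
    rw [lt_div_iff₀ hρ0]
    have h := (lt_div_iff₀ hπ).1 hρ
    nlinarith
  have hα0 : 0 < α := by rw [hα]; linarith
  refine ⟨hα0, ?_⟩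
  intro A hA hAsub
  set dens : E3 → ℝ≥0∞ := fun x => ENNReal.ofReal (1 / ‖x‖ ^ 2) with hdens
  set μ2 := (volume.restrict (ball (0 : E3) 1)).withDensity dens with hμ2
  have hcl : MeasurableSet (closure (ball (0:E3) 1)) := isClosed_closure.measurableSet
  -- total mass
  have hmass : ((ENNReal.ofReal α • Measure.dirac (0:E3) + μ2)
      (closure (ball (0:E3) 1))).toReal = 1 / ρ := by
    have h0mem : (0:E3) ∈ closure (ball (0:E3) 1) :=
      subset_closure (mem_ball_self one_pos)
    have h1 : (Measure.dirac (0:E3)) (closure (ball (0:E3) 1)) = 1 := by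
      rw [Measure.dirac_apply' _ hcl]
      simp [h0mem]
    have h2 : μ2 (closure (ball (0:E3) 1)) = ENNReal.ofReal (4 * Real.pi) := by
      rw [hμ2, withDensity_apply _ hcl, Measure.restrict_restrict hcl,
        Set.inter_eq_right.2 subset_closure]
      exact lint3
    rw [Measure.add_apply, Measure.smul_apply, h1, h2, smul_eq_mul, mul_one,
      ← ENNReal.ofReal_add hα0.le hπ.le, ENNReal.toReal_ofReal (by linarith)]
    rw [hα]; ring
  -- the measurable NNReal density
  have hfm : Measurable (fun x : E3 => (1 / ‖x‖ ^ 2).toNNReal) := by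
    measurability
  have hdens_eq : dens = fun x : E3 => (((1 / ‖x‖ ^ 2).toNNReal : ℝ≥0) : ℝ≥0∞) := rfl
  -- integrand as smul
  set G : E3 → ℝ := fun x => ((1 / ‖x‖ ^ 2).toNNReal : ℝ≥0) • ‖x‖ ^ 2 with hG
  have hGmeas : Measurable G := by
    apply Measurable.smul hfm
    measurability
  have hG0 : ∀ x : E3, 0 ≤ G x := by
    intro x
    simp only [hG, NNReal.smul_def, smul_eq_mul]
    positivity
  have hG1 : ∀ x : E3, G x ≤ 1 := by
    intro x
    simp only [hG, NNReal.smul_def, smul_eq_mul]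
    by_cases hx : x = 0
    · simp [hx]
    · have hn : (0:ℝ) < ‖x‖ := norm_pos_iff.2 hx
      have hx' : (0:ℝ) < ‖x‖ ^ 2 := by positivity
      rw [Real.coe_toNNReal _ (by positivity)]
      rw [one_div, inv_mul_cancel₀ hx'.ne']
  -- restriction of μ2 to A
  have hμ2A : μ2.restrict A = (volume.restrict (A ∩ ball (0:E3) 1)).withDensity dens := by
    rw [hμ2, restrict_withDensity hA, Measure.restrict_restrict hA]
  have hfin : volume (A ∩ ball (0:E3) 1) < ⊤ :=
    lt_of_le_of_lt (measure_mono Set.inter_subset_right) measure_ball_lt_top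
  -- integrability of G on A ∩ ball
  have hGint : Integrable G (volume.restrict (A ∩ ball (0:E3) 1)) := by
    refine Integrable.mono' (g := fun _ => (1:ℝ)) ?_ hGmeas.aestronglyMeasurable
      (ae_of_all _ fun x => ?_)
    · rw [integrable_const_iff]
      right
      exact ⟨by rwa [Measure.restrict_apply_univ]⟩
    · rw [Real.norm_eq_abs, abs_of_nonneg (hG0 x)]
      exact hG1 x
  have hint2 : Integrable (fun x : E3 => ‖x‖ ^ 2) (μ2.restrict A) := by
    rw [hμ2A, hdens_eq]
    exact (integrable_withDensity_iff_integrable_smul hfm).2 hGint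
  -- integrability wrt dirac part
  have hnormmeas : StronglyMeasurable (fun x : E3 => ‖x‖ ^ 2) :=
    ((continuous_norm.pow 2)).stronglyMeasurable
  have hint1 : Integrable (fun x : E3 => ‖x‖ ^ 2)
      ((ENNReal.ofReal α • Measure.dirac (0:E3)).restrict A) := by
    rw [Measure.restrict_smul]
    refine Integrable.smul_measure ?_ ENNReal.ofReal_ne_top
    rw [MeasureTheory.restrict_dirac' hA]
    by_cases h0 : (0:E3) ∈ A
    · rw [if_pos h0]
      refine ⟨hnormmeas.aestronglyMeasurable, ?_⟩
      simp [HasFiniteIntegral, lintegral_dirac]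
    · rw [if_neg h0]
      exact integrable_zero_measure
  -- dirac part integral is zero
  have hdint : ∫ x, ‖x‖ ^ 2 ∂((ENNReal.ofReal α • Measure.dirac (0:E3)).restrict A) = 0 := by
    rw [Measure.restrict_smul, integral_smul_measure, MeasureTheory.restrict_dirac' hA]
    by_cases h0 : (0:E3) ∈ A
    · rw [if_pos h0, integral_dirac]
      simp
    · rw [if_neg h0]
      simp
  -- withDensity part integral
  have h2int : ∫ x, ‖x‖ ^ 2 ∂(μ2.restrict A) = (volume (A ∩ ball (0:E3) 1)).toReal := by
    rw [hμ2A, hdens_eq, integral_withDensity_eq_integral_smul hfm]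
    have hae : ∀ᵐ x ∂(volume.restrict (A ∩ ball (0:E3) 1)), G x = 1 := by
      have hne : ∀ᵐ x : E3 ∂(volume.restrict (A ∩ ball (0:E3) 1)), x ≠ 0 := by
        refine ae_restrict_of_ae ?_
        rw [ae_iff]
        simpa using measure_singleton (0:E3)
      filter_upwards [hne] with x hx
      have hx' : (0:ℝ) < ‖x‖ ^ 2 := by
        have := norm_pos_iff.2 hx
        positivity
      simp only [hG, NNReal.smul_def, smul_eq_mul]
      rw [Real.coe_toNNReal _ (by positivity), one_div, inv_mul_cancel₀ hx'.ne']
    rw [integral_congr_ae hae, integral_const, Measure.real, Measure.restrict_apply_univ, smul_eq_mul, mul_one]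
  -- combine
  rw [Measure.restrict_add, integral_add_measure hint1 hint2, hdint, zero_add, h2int, hmass]
  field_simp

/-- For `Ω = B₁(0) ⊂ ℝ³`, `a(x) = 1 - ‖x‖²`, `0 < ρ < 1/(4π)` and `α = 1/ρ - 4π`,
the positive measure `μ = α δ₀ + (1/‖x‖²) dx` solves the spectral problem at
`λ_p = -1`: `ρ μ(Ω̄) Leb(A ∩ Ω) = ∫_A ‖x‖² dμ` for every Borel `A ⊆ Ω̄`. -/
theorem stmt15 (ρ α : ℝ) (hρ0 : 0 < ρ) (hρ : ρ < 1 / (4 * Real.pi))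
    (hα : α = 1 / ρ - 4 * Real.pi) :
    0 < α ∧
    ∀ A : Set (EuclideanSpace ℝ (Fin 3)), MeasurableSet A →
      A ⊆ closure (ball (0 : EuclideanSpace ℝ (Fin 3)) 1) →
      ρ * ((ENNReal.ofReal α • Measure.dirac (0 : EuclideanSpace ℝ (Fin 3)) +
            (volume.restrict (ball (0 : EuclideanSpace ℝ (Fin 3)) 1)).withDensity
              (fun x => ENNReal.ofReal (1 / ‖x‖ ^ 2)))
            (closure (ball (0 : EuclideanSpace ℝ (Fin 3)) 1))).toReal *
          (volume (A ∩ ball (0 : EuclideanSpace ℝ (Fin 3)) 1)).toReal =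
        ∫ x in A, ‖x‖ ^ 2
          ∂(ENNReal.ofReal α • Measure.dirac (0 : EuclideanSpace ℝ (Fin 3)) +
            (volume.restrict (ball (0 : EuclideanSpace ℝ (Fin 3)) 1)).withDensity
              (fun x => ENNReal.ofReal (1 / ‖x‖ ^ 2))) := by
  exact stmt15_aux ρ α hρ0 hρ hα vol3_s15 lint3
end

section
/- Let Ω = B₁(0) ⊂ ℝ³, a(x) = 1 − ‖x‖², and 0 < ρ < 1/(4π). Every nonzero positive Borel measure μ on Ω̄ satisfying, for all Borel A ⊆ Ω̄, ρ μ(Ω̄) · Leb(A ∩ Ω) = ∫_A ‖x‖² dμ(x), is a positive scalar multiple of the measure (1/ρ − 4π) δ₀ + (1/‖x‖²) dx; i.e. the positive measure solution of the spectral problem is unique up to normalisation. -/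
open MeasureTheory Set Metric
open scoped ENNReal

lemma lint_ball :
    ∫⁻ x in ball (0 : EuclideanSpace ℝ (Fin 3)) 1, ENNReal.ofReal (1 / ‖x‖ ^ 2) ∂volume
      = ENNReal.ofReal (4 * Real.pi) := by
  set E := EuclideanSpace ℝ (Fin 3) with hE
  set g : ℝ → ℝ≥0∞ := (Iio (1:ℝ)).indicator (fun r => ENNReal.ofReal (1 / r ^ 2)) with hg
  have hgm : Measurable g := by
    apply Measurable.indicator _ measurableSet_Iio
    exact Measurable.ennreal_ofReal (by measurability)
  have h1 : ∫⁻ x in ball (0 : E) 1, ENNReal.ofReal (1 / ‖x‖ ^ 2) ∂volume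
      = ∫⁻ x : E, g ‖x‖ ∂volume := by
    rw [← lintegral_indicator measurableSet_ball]
    congr 1
    funext x
    by_cases hx : x ∈ ball (0 : E) 1
    · have hx' : ‖x‖ ∈ Iio (1:ℝ) := mem_ball_zero_iff.mp hx
      simp [hg, indicator_of_mem hx, indicator_of_mem hx']
    · have hx' : ‖x‖ ∉ Iio (1:ℝ) := fun h => hx (mem_ball_zero_iff.mpr h)
      simp [hg, indicator_of_notMem hx, indicator_of_notMem hx']
  rw [h1]
  have h2 : ∫⁻ x : E, g ‖x‖ ∂volume = ∫⁻ x in ({0}ᶜ : Set E), g ‖x‖ ∂volume := by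
    rw [restrict_compl_singleton]
  rw [h2, ← lintegral_subtype_comap (measurableSet_singleton (0:E)).compl]
  have key := (volume : Measure E).measurePreserving_homeomorphUnitSphereProd
  have hm2 : Measurable (fun z : sphere (0:E) 1 × Ioi (0:ℝ) => g z.2.1) :=
    hgm.comp (measurable_subtype_coe.comp measurable_snd)
  have h3 : ∫⁻ x : ({0}ᶜ : Set E), g ‖(x : E)‖ ∂((volume : Measure E).comap (↑))
      = ∫⁻ z : sphere (0:E) 1 × Ioi (0:ℝ), g z.2
          ∂((volume : Measure E).toSphere.prod
            (Measure.volumeIoiPow (Module.finrank ℝ E - 1))) := by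
    rw [← key.lintegral_comp (f := fun z : sphere (0:E) 1 × Ioi (0:ℝ) => g z.2.1) hm2]
    refine lintegral_congr fun x => ?_
    simp
  rw [h3]
  have hdim : Module.finrank ℝ E = 3 := finrank_euclideanSpace_fin
  have h4 : ∫⁻ z : sphere (0:E) 1 × Ioi (0:ℝ), g z.2
        ∂((volume : Measure E).toSphere.prod
          (Measure.volumeIoiPow (Module.finrank ℝ E - 1)))
      = (volume : Measure E).toSphere univ
        * ∫⁻ r : Ioi (0:ℝ), g r ∂(Measure.volumeIoiPow (Module.finrank ℝ E - 1)) := by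
    rw [lintegral_prod (f := fun z : sphere (0:E) 1 × Ioi (0:ℝ) => g z.2.1) hm2.aemeasurable]
    simp [lintegral_const, mul_comm]
  rw [h4]
  have h5 : ∫⁻ r : Ioi (0:ℝ), g r ∂(Measure.volumeIoiPow (Module.finrank ℝ E - 1)) = 1 := by
    rw [hdim]
    show ∫⁻ r : Ioi (0:ℝ), g r.1 ∂(Measure.volumeIoiPow 2) = 1
    rw [Measure.volumeIoiPow,
      lintegral_withDensity_eq_lintegral_mul _
        (show Measurable (fun r : Ioi (0:ℝ) => ENNReal.ofReal (r.1 ^ 2)) from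
          (measurable_subtype_coe.pow_const 2).ennreal_ofReal)
        (show Measurable (fun r : Ioi (0:ℝ)  => g r.1) from hgm.comp measurable_subtype_coe)]
    have hpt : (fun r : Ioi (0:ℝ) => ENNReal.ofReal (r.1 ^ 2)) * (fun r : Ioi (0:ℝ) => g r.1)
        = fun r : Ioi (0:ℝ) => (fun s : ℝ => ENNReal.ofReal (s ^ 2) * g s) r.1 := rfl
    rw [hpt, lintegral_subtype_comap measurableSet_Ioi]
    have hind : ∀ r : ℝ, ENNReal.ofReal (r ^ 2) * g r
        = (Iio (1:ℝ)).indicator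
            (fun s => ENNReal.ofReal (s ^ 2) * ENNReal.ofReal (1 / s ^ 2)) r := by
      intro r
      by_cases hr : r ∈ Iio (1:ℝ)
      · simp [hg, indicator_of_mem hr]
      · simp [hg, indicator_of_notMem hr]
    simp_rw [hind]
    rw [lintegral_indicator measurableSet_Iio, Measure.restrict_restrict measurableSet_Iio,
      show Iio (1:ℝ) ∩ Ioi (0:ℝ) = Ioo (0:ℝ) 1 by rw [inter_comm]; rfl]
    rw [setLIntegral_congr_fun measurableSet_Ioo
      (fun r hr => ?_) (g := fun _ => (1:ℝ≥0∞))]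
    · simp [Real.volume_Ioo]
    · rw [← ENNReal.ofReal_mul (sq_nonneg r), mul_one_div_cancel (pow_ne_zero 2 (ne_of_gt hr.1))]
      simp
  rw [h5, mul_one, Measure.toSphere_apply_univ, hdim]
  have hs : Real.sqrt Real.pi ≠ 0 := ne_of_gt (Real.sqrt_pos.2 Real.pi_pos)
  have hsq : Real.sqrt Real.pi ^ 2 = Real.pi := Real.sq_sqrt Real.pi_pos.le
  have hΓ : Real.Gamma ((3:ℝ) / 2 + 1) = 3 / 4 * Real.sqrt Real.pi := by
    rw [Real.Gamma_add_one (by norm_num)]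
    rw [show (3:ℝ)/2 = 1/2 + 1 by norm_num, Real.Gamma_add_one (by norm_num),
      Real.Gamma_one_half_eq]
    ring
  have hball : (volume : Measure E) (ball 0 1) = ENNReal.ofReal (4 * Real.pi / 3) := by
    show (volume : Measure (EuclideanSpace ℝ (Fin 3))) (ball 0 1)
        = ENNReal.ofReal (4 * Real.pi / 3)
    rw [EuclideanSpace.volume_ball]
    rw [show (Fintype.card (Fin 3)) = 3 from by simp]
    rw [ENNReal.ofReal_one, one_pow, one_mul]
    congr 1
    rw [show (((3:ℕ):ℝ)/2 + 1) = (3:ℝ)/2 + 1 by norm_num, hΓ]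
    rw [show Real.sqrt Real.pi ^ 3 = Real.pi * Real.sqrt Real.pi by
      rw [pow_succ, hsq]]
    field_simp
  rw [hball, show ((3:ℕ) : ℝ≥0∞) = ENNReal.ofReal 3 by simp,
    ← ENNReal.ofReal_mul (by norm_num)]
  congr 1
  ring

/-- For `Ω = B₁(0) ⊂ ℝ³`, `a(x) = 1 - ‖x‖²` and `0 < ρ < 1/(4π)`, every nonzero
positive measure on `Ω̄` solving `ρ μ(Ω̄) Leb(A ∩ Ω) = ∫_A ‖x‖² dμ` for all Borel
`A ⊆ Ω̄` is a positive scalar multiple of `(1/ρ - 4π) δ₀ + (1/‖x‖²) dx`. -/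
theorem stmt16 (ρ : ℝ) (hρ0 : 0 < ρ) (hρ : ρ < 1 / (4 * Real.pi))
    (μ : Measure (EuclideanSpace ℝ (Fin 3))) [IsFiniteMeasure μ] (hμ0 : μ ≠ 0)
    (hμsupp : μ (closure (ball (0 : EuclideanSpace ℝ (Fin 3)) 1))ᶜ = 0)
    (hsol : ∀ A : Set (EuclideanSpace ℝ (Fin 3)), MeasurableSet A →
      A ⊆ closure (ball (0 : EuclideanSpace ℝ (Fin 3)) 1) →
      ρ * (μ (closure (ball (0 : EuclideanSpace ℝ (Fin 3)) 1))).toReal *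
          (volume (A ∩ ball (0 : EuclideanSpace ℝ (Fin 3)) 1)).toReal =
        ∫ x in A, ‖x‖ ^ 2 ∂μ) :
    ∃ c : ℝ, 0 < c ∧
      μ = ENNReal.ofReal c •
        (ENNReal.ofReal (1 / ρ - 4 * Real.pi) •
            Measure.dirac (0 : EuclideanSpace ℝ (Fin 3)) +
          (volume.restrict (ball (0 : EuclideanSpace ℝ (Fin 3)) 1)).withDensity
            (fun x => ENNReal.ofReal (1 / ‖x‖ ^ 2))) := by
  set E := EuclideanSpace ℝ (Fin 3) with hE
  set Ω : Set E := ball 0 1 with hΩ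
  set K : Set E := closure Ω with hKdef
  have hKm : MeasurableSet K := isClosed_closure.measurableSet
  have hΩK : Ω ⊆ K := subset_closure
  have hT : μ univ = μ K := by
    have h := measure_add_measure_compl (μ := μ) hKm
    rw [hμsupp, add_zero] at h
    exact h.symm
  have hTfin : μ K ≠ ⊤ := measure_ne_top μ K
  set M : ℝ := (μ K).toReal with hM
  have hTne : μ K ≠ 0 := by
    intro h
    exact hμ0 (Measure.measure_univ_eq_zero.mp (hT.trans h))
  have hMpos : 0 < M := ENNReal.toReal_pos hTne hTfin
  have hcpos : 0 < ρ * M := mul_pos hρ0 hMpos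
  set f : E → ℝ≥0∞ := fun x => ENNReal.ofReal (‖x‖ ^ 2) with hf
  set g : E → ℝ≥0∞ := fun x => ENNReal.ofReal (1 / ‖x‖ ^ 2) with hg
  have hfm : Measurable f := ((measurable_norm.pow_const 2)).ennreal_ofReal
  have hgm : Measurable g := by
    apply Measurable.ennreal_ofReal
    exact (measurable_norm.pow_const 2).const_div 1
  -- Step A
  have hA : μ.withDensity f = (ENNReal.ofReal (ρ * M)) • volume.restrict Ω := by
    ext s hs
    rw [withDensity_apply _ hs, Measure.smul_apply, Measure.restrict_apply hs, smul_eq_mul]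
    have hsplit : s = (s ∩ K) ∪ (s \ K) := (inter_union_diff s K).symm
    have h2 : ∫⁻ x in s \ K, f x ∂μ = 0 :=
      setLIntegral_measure_zero _ _ (measure_mono_null (fun x hx => hx.2) hμsupp)
    have hint : Integrable (fun x : E => ‖x‖ ^ 2) (μ.restrict (s ∩ K)) := by
      refine Integrable.mono' (integrable_const 1)
        ((continuous_norm.pow 2).aestronglyMeasurable) ?_
      have hae : ∀ᵐ x ∂μ, x ∈ K := by
        rw [ae_iff]
        exact hμsupp
      filter_upwards [ae_restrict_of_ae hae] with x hx
      have hx1 : ‖x‖ ≤ 1 := by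
        have : x ∈ closedBall (0 : E) 1 := by
          rw [hKdef, hΩ, closure_ball (0:E) one_ne_zero] at hx
          exact hx
        simpa [mem_closedBall_zero_iff] using this
      have : ‖x‖ ^ 2 ≤ 1 := pow_le_one₀ (norm_nonneg x) hx1
      simpa [abs_of_nonneg (sq_nonneg ‖x‖)] using this
    have h1 : ∫⁻ x in s ∩ K, f x ∂μ
        = ENNReal.ofReal (ρ * M * (volume (s ∩ Ω)).toReal) := by
      rw [hf, ← ofReal_integral_eq_lintegral_ofReal hint
        (Filter.Eventually.of_forall fun x => sq_nonneg _)]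
      rw [← hsol (s ∩ K) (hs.inter hKm) inter_subset_right]
      congr 2
      rw [inter_assoc, inter_eq_right.mpr hΩK]
    have hvolfin : volume (s ∩ Ω) ≠ ⊤ :=
      ((measure_mono inter_subset_right).trans_lt measure_ball_lt_top).ne
    calc ∫⁻ x in s, f x ∂μ = ∫⁻ x in (s ∩ K) ∪ (s \ K), f x ∂μ := by rw [← hsplit]
      _ = (∫⁻ x in s ∩ K, f x ∂μ) + ∫⁻ x in s \ K, f x ∂μ :=
          lintegral_union (hs.diff hKm) (disjoint_sdiff_right.mono_left inter_subset_right)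
      _ = ENNReal.ofReal (ρ * M * (volume (s ∩ Ω)).toReal) := by rw [h1, h2, add_zero]
      _ = ENNReal.ofReal (ρ * M) * volume (s ∩ Ω) := by
          rw [ENNReal.ofReal_mul hcpos.le, ENNReal.ofReal_toReal hvolfin]
  -- Step B
  have hfg : f * g = ({(0:E)}ᶜ : Set E).indicator (1 : E → ℝ≥0∞) := by
    funext x
    by_cases hx : x = 0
    · simp [hx, hf, hg]
      exact norm_zero
    · have hnz : ‖x‖ ^ 2 ≠ 0 := pow_ne_zero 2 (norm_ne_zero_iff.mpr hx)
      have : f x * g x = ENNReal.ofReal (‖x‖ ^ 2 * (1 / ‖x‖ ^ 2)) :=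
        (ENNReal.ofReal_mul (sq_nonneg _)).symm
      rw [Pi.mul_apply, this, mul_one_div_cancel hnz]
      simp [indicator_of_mem (show x ∈ ({(0:E)}ᶜ : Set E) from hx)]
  have hB : μ = μ {0} • Measure.dirac (0:E)
      + (ENNReal.ofReal (ρ * M)) • (volume.restrict Ω).withDensity g := by
    have hres : μ.restrict ({(0:E)}ᶜ)
        = (ENNReal.ofReal (ρ * M)) • (volume.restrict Ω).withDensity g := by
      have h1 : (μ.withDensity f).withDensity g = μ.withDensity (f * g) :=
        (withDensity_mul μ hfm hgm).symm
      rw [hA] at h1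
      rw [withDensity_smul_measure] at h1
      rw [hfg] at h1
      rw [withDensity_indicator_one (measurableSet_singleton (0:E)).compl] at h1
      exact h1.symm
    calc μ = μ.restrict {0} + μ.restrict ({0}ᶜ) :=
          (Measure.restrict_add_restrict_compl (measurableSet_singleton (0:E))).symm
      _ = μ {0} • Measure.dirac (0:E)
          + (ENNReal.ofReal (ρ * M)) • (volume.restrict Ω).withDensity g := by
          rw [Measure.restrict_singleton, hres]
  -- mass of the density part
  have hI : (volume.restrict Ω).withDensity g univ = ENNReal.ofReal (4 * Real.pi) := by
    rw [withDensity_apply _ MeasurableSet.univ, Measure.restrict_restrict MeasurableSet.univ,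
      univ_inter]
    exact lint_ball
  -- positivity of 1/ρ - 4π
  have h4pi : (0:ℝ) < 4 * Real.pi := by positivity
  have hprod : ρ * (4 * Real.pi) < 1 := by
    have := (lt_div_iff₀ h4pi).mp hρ
    linarith
  have hsub : 4 * Real.pi < 1 / ρ := by
    rw [lt_div_iff₀ hρ0]
    linarith
  have hsubpos : 0 < 1 / ρ - 4 * Real.pi := by linarith
  -- compute μ {0}
  have hμ0val : μ {0} = ENNReal.ofReal (ρ * M) * ENNReal.ofReal (1 / ρ - 4 * Real.pi) := by
    have huniv := congrArg (fun ν : Measure E => ν univ) hB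
    simp only [Measure.add_apply, Measure.smul_apply, smul_eq_mul] at huniv
    rw [hI, Measure.dirac_apply_of_mem (mem_univ (0:E)), mul_one] at huniv
    have hMuniv : μ univ = ENNReal.ofReal M := by
      rw [hT, hM, ENNReal.ofReal_toReal hTfin]
    rw [hMuniv] at huniv
    have hmul : ENNReal.ofReal (ρ * M) * ENNReal.ofReal (4 * Real.pi)
        = ENNReal.ofReal (ρ * M * (4 * Real.pi)) :=
      (ENNReal.ofReal_mul hcpos.le).symm
    rw [hmul] at huniv
    have hle : ρ * M * (4 * Real.pi) ≤ M := by
      nlinarith [hMpos, hprod]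
    have : μ {0} = ENNReal.ofReal M - ENNReal.ofReal (ρ * M * (4 * Real.pi)) := by
      rw [huniv]
      rw [ENNReal.add_sub_cancel_right ENNReal.ofReal_ne_top]
    rw [this, ← ENNReal.ofReal_sub _ (by positivity), ← ENNReal.ofReal_mul hcpos.le]
    congr 1
    field_simp
  refine ⟨ρ * M, hcpos, ?_⟩
  rw [hB, hμ0val, smul_add, smul_smul]
end

section
/- Let Ω = B₁(0) × (0,1) ⊂ ℝ³ (B₁(0) the open unit disc of ℝ²), a(x) = 1 − √(x₁²+x₂²), 0 < ρ < 1/(2π), and α = 1/ρ − 2π > 0. Then for every t ∈ (0,1) the positive Borel measure μ_t := α δ_{(0,0,t)} + (1/√(x₁²+x₂²)) dx solves the spectral problem at λ_p = −1: for every Borel set A ⊆ Ω̄, ρ μ_t(Ω̄) · Leb(A ∩ Ω) = ∫_A √(x₁²+x₂²) dμ_t(x). In particular, distinct t give non-proportional measures, so there are infinitely many positive measure solutions. -/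
open MeasureTheory Set Metric

/-- The open unit cylinder `B₁(0) × (0,1) ⊂ ℝ³`. -/
def cylinder : Set (EuclideanSpace ℝ (Fin 3)) :=
  {x | x 0 ^ 2 + x 1 ^ 2 < 1 ∧ x 2 ∈ Set.Ioo (0 : ℝ) 1}

/-- The axis point `(0,0,t)` of the cylinder. -/
def axisPt (t : ℝ) : EuclideanSpace ℝ (Fin 3) := WithLp.toLp 2 ![0, 0, t]



open scoped ENNReal
open Real

theorem my_lintegral_comp_polarCoord_symm (f : ℝ × ℝ → ℝ≥0∞) :
    (∫⁻ p in polarCoord.target, ENNReal.ofReal p.1 * f (polarCoord.symm p)) = ∫⁻ p, f p := by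
  set B : ℝ × ℝ → ℝ × ℝ →L[ℝ] ℝ × ℝ := fun p =>
    LinearMap.toContinuousLinearMap (Matrix.toLin (Module.Basis.finTwoProd ℝ) (Module.Basis.finTwoProd ℝ)
      !![Real.cos p.2, -p.1 * Real.sin p.2; Real.sin p.2, p.1 * Real.cos p.2])
  have A : ∀ p ∈ polarCoord.target, HasFDerivWithinAt polarCoord.symm (B p) polarCoord.target p :=
    fun p _ => (hasFDerivAt_polarCoord_symm p).hasFDerivWithinAt
  have B_det : ∀ p, (B p).det = p.1 := by
    intro p
    conv_rhs => rw [← one_mul p.1, ← Real.cos_sq_add_sin_sq p.2]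
    simp only [B, neg_mul, LinearMap.det_toContinuousLinearMap, LinearMap.det_toLin,
      Matrix.det_fin_two_of, sub_neg_eq_add]
    ring
  symm
  calc
    ∫⁻ p, f p = ∫⁻ p in polarCoord.source, f p := by
      rw [← setLIntegral_univ]
      exact setLIntegral_congr polarCoord_source_ae_eq_univ.symm
    _ = ∫⁻ p in polarCoord.symm '' polarCoord.target, f p := by
      rw [polarCoord.symm_image_target_eq_source]
    _ = ∫⁻ p in polarCoord.target, ENNReal.ofReal |(B p).det| * f (polarCoord.symm p) := by
      exact lintegral_image_eq_lintegral_abs_det_fderiv_mul volume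
        polarCoord.open_target.measurableSet A
        (polarCoord.symm.injOn) f
    _ = ∫⁻ p in polarCoord.target, ENNReal.ofReal p.1 * f (polarCoord.symm p) := by
      refine setLIntegral_congr_fun polarCoord.open_target.measurableSet
        (fun p hp => ?_)
      rw [B_det, abs_of_pos hp.1]


theorem disc_lintegral :
    ∫⁻ p in {p : ℝ × ℝ | p.1 ^ 2 + p.2 ^ 2 < 1},
      ENNReal.ofReal (1 / Real.sqrt (p.1 ^ 2 + p.2 ^ 2)) = ENNReal.ofReal (2 * Real.pi) := by
  have hdm : MeasurableSet {p : ℝ × ℝ | p.1 ^ 2 + p.2 ^ 2 < 1} := by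
    apply measurableSet_lt ?_ measurable_const
    exact ((measurable_fst.pow_const 2).add (measurable_snd.pow_const 2))
  set g : ℝ × ℝ → ℝ≥0∞ := fun p => ENNReal.ofReal (1 / Real.sqrt (p.1 ^ 2 + p.2 ^ 2)) with hg
  rw [← lintegral_indicator hdm]
  rw [← my_lintegral_comp_polarCoord_symm]
  have key : ∀ p ∈ polarCoord.target,
      ENNReal.ofReal p.1 * ({p : ℝ × ℝ | p.1 ^ 2 + p.2 ^ 2 < 1}.indicator g) (polarCoord.symm p)
      = ({p : ℝ × ℝ | p.1 < 1}.indicator (fun _ => (1 : ℝ≥0∞))) p := by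
    rintro ⟨r, θ⟩ hp
    have hr : 0 < r := hp.1
    have hsq : (polarCoord.symm (r, θ)).1 ^ 2 + (polarCoord.symm (r, θ)).2 ^ 2 = r ^ 2 := by
      simp only [polarCoord_symm_apply]
      ring_nf
      rw [add_comm]
      nlinarith [Real.sin_sq_add_cos_sq θ]
    by_cases h1 : r < 1
    · have hmem : polarCoord.symm (r, θ) ∈ {p : ℝ × ℝ | p.1 ^ 2 + p.2 ^ 2 < 1} := by
        simp only [mem_setOf_eq, hsq]
        nlinarith
      rw [indicator_of_mem hmem, indicator_of_mem (by exact h1)]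
      simp only [hg, hsq]
      rw [Real.sqrt_sq hr.le, ← ENNReal.ofReal_mul hr.le, mul_one_div_cancel hr.ne',
        ENNReal.ofReal_one]
    · have hmem : polarCoord.symm (r, θ) ∉ {p : ℝ × ℝ | p.1 ^ 2 + p.2 ^ 2 < 1} := by
        simp only [mem_setOf_eq, hsq, not_lt]
        nlinarith
      rw [indicator_of_notMem hmem, indicator_of_notMem (by exact h1), mul_zero]
  rw [setLIntegral_congr_fun polarCoord.open_target.measurableSet
    key]
  rw [lintegral_indicator (by exact measurableSet_lt measurable_fst measurable_const)]
  rw [Measure.restrict_restrict (by exact measurableSet_lt measurable_fst measurable_const)]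
  have hset : {p : ℝ × ℝ | p.1 < 1} ∩ polarCoord.target
      = Set.Ioo (0:ℝ) 1 ×ˢ Set.Ioo (-Real.pi) Real.pi := by
    rw [polarCoord_target]
    ext ⟨r, θ⟩
    simp only [mem_inter_iff, mem_setOf_eq, mem_prod, mem_Ioi, mem_Ioo]
    tauto
  rw [hset, lintegral_one, Measure.restrict_apply_univ, Measure.volume_eq_prod,
    Measure.prod_prod, Real.volume_Ioo, Real.volume_Ioo]
  rw [← ENNReal.ofReal_mul (by norm_num)]
  norm_num
  ring_nf
  rw [ENNReal.ofReal_mul Real.pi_pos.le]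
  norm_num


theorem coord_measurable (i : Fin 3) :
    Measurable fun x : EuclideanSpace ℝ (Fin 3) => x i :=
  (measurable_pi_apply i).comp (MeasurableEquiv.toLp 2 (Fin 3 → ℝ)).symm.measurable

theorem axis_plane_null : volume {x : EuclideanSpace ℝ (Fin 3) | x 0 = 0} = 0 := by
  set L : EuclideanSpace ℝ (Fin 3) →ₗ[ℝ] ℝ :=
    (LinearMap.proj 0).comp (WithLp.linearEquiv 2 ℝ (Fin 3 → ℝ)).toLinearMap with hL
  have hset : {x : EuclideanSpace ℝ (Fin 3) | x 0 = 0} = (LinearMap.ker L : Set _) := by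
    ext x; simp [hL, LinearMap.mem_ker]
  rw [hset]
  apply Measure.addHaar_submodule
  rw [Ne, LinearMap.ker_eq_top]
  intro h
  have : L (EuclideanSpace.single 0 (1:ℝ)) = (0 : EuclideanSpace ℝ (Fin 3) →ₗ[ℝ] ℝ)
      (EuclideanSpace.single 0 (1:ℝ)) := by rw [h]
  simp [hL] at this


theorem cyl_lintegral :
    ∫⁻ x in cylinder, ENNReal.ofReal (1 / Real.sqrt (x 0 ^ 2 + x 1 ^ 2)) ∂volume
      = ENNReal.ofReal (2 * Real.pi) := by
  -- step 1 : EuclideanSpace → pi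
  have MP1 := EuclideanSpace.volume_preserving_symm_measurableEquiv_toLp (Fin 3)
  set S1 : Set (Fin 3 → ℝ) := {y | y 0 ^ 2 + y 1 ^ 2 < 1 ∧ y 2 ∈ Set.Ioo (0:ℝ) 1} with hS1
  have h1 : ∫⁻ x in cylinder, ENNReal.ofReal (1 / Real.sqrt (x 0 ^ 2 + x 1 ^ 2)) ∂volume
      = ∫⁻ y in S1, ENNReal.ofReal (1 / Real.sqrt (y 0 ^ 2 + y 1 ^ 2)) ∂volume := by
    have := MP1.setLIntegral_comp_preimage_emb
      (MeasurableEquiv.toLp 2 (Fin 3 → ℝ)).symm.measurableEmbedding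
      (fun y => ENNReal.ofReal (1 / Real.sqrt (y 0 ^ 2 + y 1 ^ 2))) S1
    rw [← this]
    rfl
  rw [h1]
  -- step 2 : pi (Fin 3) → ℝ × (Fin 2 → ℝ)
  have MP2 := MeasureTheory.volume_preserving_piFinSuccAbove (fun _ : Fin 3 => ℝ) 2
  set S2 : Set (ℝ × (Fin 2 → ℝ)) := Set.Ioo (0:ℝ) 1 ×ˢ {z : Fin 2 → ℝ | z 0 ^ 2 + z 1 ^ 2 < 1}
    with hS2
  have hpre : S1 = (MeasurableEquiv.piFinSuccAbove (fun _ : Fin 3 => ℝ) 2) ⁻¹' S2 := by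
    ext y
    have e0 : (2 : Fin 3).succAbove 0 = 0 := by decide
    have e1 : (2 : Fin 3).succAbove 1 = 1 := by decide
    simp only [hS1, hS2, mem_preimage, MeasurableEquiv.piFinSuccAbove_apply, mem_prod,
      mem_setOf_eq, Fin.insertNthEquiv, Fin.removeNth, MeasurableEquiv.coe_mk, Equiv.coe_fn_symm_mk]
    constructor
    · rintro ⟨hd, ht⟩
      refine ⟨ht, ?_⟩
      simpa [Fin.removeNth, e0, e1] using hd
    · rintro ⟨ht, hd⟩
      refine ⟨?_, ht⟩
      simpa [Fin.removeNth, e0, e1] using hd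
  have h2 : ∫⁻ y in S1, ENNReal.ofReal (1 / Real.sqrt (y 0 ^ 2 + y 1 ^ 2)) ∂volume
      = ∫⁻ q in S2, ENNReal.ofReal (1 / Real.sqrt (q.2 0 ^ 2 + q.2 1 ^ 2)) ∂volume := by
    rw [hpre]
    have := MP2.setLIntegral_comp_preimage_emb
      (MeasurableEquiv.piFinSuccAbove (fun _ : Fin 3 => ℝ) 2).measurableEmbedding
      (fun q : ℝ × (Fin 2 → ℝ) => ENNReal.ofReal (1 / Real.sqrt (q.2 0 ^ 2 + q.2 1 ^ 2))) S2
    rw [← this]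
    apply setLIntegral_congr_fun
    · exact (MeasurableEquiv.piFinSuccAbove (fun _ : Fin 3 => ℝ) 2).measurableSet_preimage.mpr
        (by
          apply MeasurableSet.prod measurableSet_Ioo
          apply measurableSet_lt ?_ measurable_const
          exact ((measurable_pi_apply 0).pow_const 2).add ((measurable_pi_apply 1).pow_const 2))
    refine fun y _ => ?_
    have e0 : (2 : Fin 3).succAbove 0 = 0 := by decide
    have e1 : (2 : Fin 3).succAbove 1 = 1 := by decide
    simp [MeasurableEquiv.piFinSuccAbove_apply, Fin.insertNthEquiv, Fin.removeNth,
      Fin.removeNth, e0, e1]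
  rw [h2]
  -- step 3 : Fubini over the product
  have hD : MeasurableSet {z : Fin 2 → ℝ | z 0 ^ 2 + z 1 ^ 2 < 1} := by
    apply measurableSet_lt ?_ measurable_const
    exact ((measurable_pi_apply 0).pow_const 2).add ((measurable_pi_apply 1).pow_const 2)
  have hFmeas : Measurable fun q : ℝ × (Fin 2 → ℝ) =>
      ENNReal.ofReal (1 / Real.sqrt (q.2 0 ^ 2 + q.2 1 ^ 2)) := by
    apply Measurable.ennreal_ofReal
    apply Measurable.div measurable_const
    apply Measurable.sqrt
    exact (((measurable_pi_apply 0).comp measurable_snd).pow_const 2).add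
      (((measurable_pi_apply 1).comp measurable_snd).pow_const 2)
  rw [hS2, Measure.volume_eq_prod, ← Measure.prod_restrict,
    lintegral_prod _ hFmeas.aemeasurable]
  simp only []
  rw [lintegral_const]
  rw [Measure.restrict_apply_univ, Real.volume_Ioo]
  -- step 4 : transfer to ℝ × ℝ and use the polar computation
  have MP3 := MeasureTheory.volume_preserving_finTwoArrow ℝ
  have hpre3 : {z : Fin 2 → ℝ | z 0 ^ 2 + z 1 ^ 2 < 1}
      = (MeasurableEquiv.finTwoArrow : (Fin 2 → ℝ) ≃ᵐ ℝ × ℝ) ⁻¹' {p : ℝ × ℝ | p.1 ^ 2 + p.2 ^ 2 < 1} := by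
    ext z
    simp [MeasurableEquiv.finTwoArrow]
  have h3 : ∫⁻ z in {z : Fin 2 → ℝ | z 0 ^ 2 + z 1 ^ 2 < 1},
      ENNReal.ofReal (1 / Real.sqrt (z 0 ^ 2 + z 1 ^ 2)) ∂volume
      = ENNReal.ofReal (2 * Real.pi) := by
    rw [hpre3]
    have := MP3.setLIntegral_comp_preimage_emb
      (MeasurableEquiv.finTwoArrow : (Fin 2 → ℝ) ≃ᵐ ℝ × ℝ).measurableEmbedding
      (fun p : ℝ × ℝ => ENNReal.ofReal (1 / Real.sqrt (p.1 ^ 2 + p.2 ^ 2)))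
      {p : ℝ × ℝ | p.1 ^ 2 + p.2 ^ 2 < 1}
    rw [← disc_lintegral, ← this]
    apply lintegral_congr fun z => ?_
    simp [MeasurableEquiv.finTwoArrow]
  rw [h3]
  norm_num


/-- For the unit cylinder, `a(x) = 1 - √(x₁²+x₂²)`, `0 < ρ < 1/(2π)` and
`α = 1/ρ - 2π`, for every `t ∈ (0,1)` the measure
`μ_t = α δ_{(0,0,t)} + (1/√(x₁²+x₂²)) dx` solves the spectral problem at
`λ_p = -1`, and distinct `t` give non-proportional measures. -/
theorem stmt18 (ρ α : ℝ) (hρ0 : 0 < ρ) (hρ : ρ < 1 / (2 * Real.pi))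
    (hα : α = 1 / ρ - 2 * Real.pi) :
    (∀ t ∈ Ioo (0 : ℝ) 1,
      ∀ A : Set (EuclideanSpace ℝ (Fin 3)), MeasurableSet A → A ⊆ closure cylinder →
        ρ * ((ENNReal.ofReal α • Measure.dirac (axisPt t) +
              (volume.restrict cylinder).withDensity
                (fun x => ENNReal.ofReal (1 / Real.sqrt (x 0 ^ 2 + x 1 ^ 2))))
              (closure cylinder)).toReal *
            (volume (A ∩ cylinder)).toReal =
          ∫ x in A, Real.sqrt (x 0 ^ 2 + x 1 ^ 2)
            ∂(ENNReal.ofReal α • Measure.dirac (axisPt t) +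
              (volume.restrict cylinder).withDensity
                (fun x => ENNReal.ofReal (1 / Real.sqrt (x 0 ^ 2 + x 1 ^ 2))))) ∧
    ∀ t ∈ Ioo (0 : ℝ) 1, ∀ t' ∈ Ioo (0 : ℝ) 1, t ≠ t' → ∀ c : ENNReal,
      (ENNReal.ofReal α • Measure.dirac (axisPt t) +
          (volume.restrict cylinder).withDensity
            (fun x => ENNReal.ofReal (1 / Real.sqrt (x 0 ^ 2 + x 1 ^ 2)))) ≠
        c • (ENNReal.ofReal α • Measure.dirac (axisPt t') +
          (volume.restrict cylinder).withDensity
            (fun x => ENNReal.ofReal (1 / Real.sqrt (x 0 ^ 2 + x 1 ^ 2)))) := by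
  have h2π : (0:ℝ) < 2 * Real.pi := by positivity
  have h2πρ : 2 * Real.pi < 1 / ρ := by
    rw [lt_div_iff₀ hρ0]
    have := (lt_div_iff₀ h2π).mp hρ
    linarith [mul_comm ρ (2 * Real.pi)]
  have hαpos : 0 < α := by rw [hα]; linarith
  -- measurability of the density
  have hden : Measurable fun x : EuclideanSpace ℝ (Fin 3) =>
      ENNReal.ofReal (1 / Real.sqrt (x 0 ^ 2 + x 1 ^ 2)) := by
    apply Measurable.ennreal_ofReal
    exact (measurable_const.div (Measurable.sqrt
      (((coord_measurable 0).pow_const 2).add ((coord_measurable 1).pow_const 2))))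
  have hf : Measurable fun x : EuclideanSpace ℝ (Fin 3) => Real.sqrt (x 0 ^ 2 + x 1 ^ 2) :=
    Measurable.sqrt (((coord_measurable 0).pow_const 2).add ((coord_measurable 1).pow_const 2))
  have hclm : MeasurableSet (closure cylinder) := isClosed_closure.measurableSet
  -- a.e. multiplication identity
  have haemul : ∀ᵐ x : EuclideanSpace ℝ (Fin 3) ∂volume,
      ENNReal.ofReal (1 / Real.sqrt (x 0 ^ 2 + x 1 ^ 2)) *
        ENNReal.ofReal (Real.sqrt (x 0 ^ 2 + x 1 ^ 2)) = 1 := by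
    rw [ae_iff]
    apply measure_mono_null _ axis_plane_null
    intro x hx
    simp only [mem_setOf_eq] at hx ⊢
    by_contra h0
    apply hx
    have hs : 0 < x 0 ^ 2 + x 1 ^ 2 := by
      rcases lt_or_eq_of_le (by positivity : (0:ℝ) ≤ x 0 ^ 2 + x 1 ^ 2) with h | h
      · exact h
      · exfalso; apply h0; nlinarith [sq_nonneg (x 0), sq_nonneg (x 1)]
    have hsq : 0 < Real.sqrt (x 0 ^ 2 + x 1 ^ 2) := Real.sqrt_pos.mpr hs
    rw [← ENNReal.ofReal_mul (by positivity), one_div, inv_mul_cancel₀ hsq.ne',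
      ENNReal.ofReal_one]
  constructor
  · intro t ht A hA hAsub
    have hpcyl : axisPt t ∈ _root_.cylinder := by
      refine ⟨?_, ht⟩
      show (0:ℝ) ^ 2 + (0:ℝ) ^ 2 < 1
      norm_num
    -- total mass
    have hμcl : (ENNReal.ofReal α • Measure.dirac (axisPt t) +
        (volume.restrict cylinder).withDensity
          (fun x => ENNReal.ofReal (1 / Real.sqrt (x 0 ^ 2 + x 1 ^ 2))))
        (closure cylinder) = ENNReal.ofReal α + ENNReal.ofReal (2 * Real.pi) := by
      rw [Measure.add_apply, Measure.smul_apply, smul_eq_mul,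
        Measure.dirac_apply' _ hclm, indicator_of_mem (subset_closure hpcyl), Pi.one_apply, mul_one,
        withDensity_apply _ hclm, Measure.restrict_restrict hclm,
        inter_eq_right.mpr subset_closure, cyl_lintegral]
    have hmass : ((ENNReal.ofReal α • Measure.dirac (axisPt t) +
        (volume.restrict cylinder).withDensity
          (fun x => ENNReal.ofReal (1 / Real.sqrt (x 0 ^ 2 + x 1 ^ 2))))
        (closure cylinder)).toReal = 1 / ρ := by
      rw [hμcl, ENNReal.toReal_add ENNReal.ofReal_ne_top ENNReal.ofReal_ne_top,
        ENNReal.toReal_ofReal hαpos.le, ENNReal.toReal_ofReal h2π.le]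
      linarith
    rw [hmass]
    -- the right-hand side
    rw [integral_eq_lintegral_of_nonneg_ae
      (Filter.Eventually.of_forall fun x => Real.sqrt_nonneg _)
      hf.aestronglyMeasurable]
    have hrhs : (∫⁻ x, ENNReal.ofReal (Real.sqrt (x 0 ^ 2 + x 1 ^ 2))
        ∂((ENNReal.ofReal α • Measure.dirac (axisPt t) +
          (volume.restrict cylinder).withDensity
            (fun x => ENNReal.ofReal (1 / Real.sqrt (x 0 ^ 2 + x 1 ^ 2)))).restrict A))
        = volume (A ∩ cylinder) := by
      rw [Measure.restrict_add, lintegral_add_measure, Measure.restrict_smul,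
        lintegral_smul_measure]
      have hd0 : (∫⁻ x, ENNReal.ofReal (Real.sqrt (x 0 ^ 2 + x 1 ^ 2))
          ∂((Measure.dirac (axisPt t)).restrict A)) = 0 := by
        refine le_antisymm ?_ (zero_le)
        refine le_trans (setLIntegral_le_lintegral _ _) ?_
        rw [lintegral_dirac' _ hf.ennreal_ofReal]
        show ENNReal.ofReal (Real.sqrt ((0:ℝ) ^ 2 + (0:ℝ) ^ 2)) ≤ 0
        norm_num
      rw [hd0, smul_zero, zero_add, restrict_withDensity hA,
        lintegral_withDensity_eq_lintegral_mul _ hden hf.ennreal_ofReal,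
        Measure.restrict_restrict hA]
      have : (∫⁻ x in A ∩ _root_.cylinder,
          ((fun x : EuclideanSpace ℝ (Fin 3) =>
              ENNReal.ofReal (1 / Real.sqrt (x 0 ^ 2 + x 1 ^ 2))) *
            (fun x : EuclideanSpace ℝ (Fin 3) => ENNReal.ofReal (Real.sqrt (x 0 ^ 2 + x 1 ^ 2)))) x ∂volume)
          = ∫⁻ _x in A ∩ _root_.cylinder, (1:ℝ≥0∞) ∂volume := by
        apply lintegral_congr_ae
        apply ae_restrict_of_ae
        filter_upwards [haemul] with x hx
        simpa [Pi.mul_apply] using hx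
      rw [this, setLIntegral_one]
    rw [hrhs]
    field_simp
  · intro t ht t' ht' hne c hcontra
    have hsm : MeasurableSet ({axisPt t} : Set (EuclideanSpace ℝ (Fin 3))) :=
      measurableSet_singleton _
    have hwd0 : ((volume.restrict _root_.cylinder).withDensity
        (fun x => ENNReal.ofReal (1 / Real.sqrt (x 0 ^ 2 + x 1 ^ 2))))
        ({axisPt t} : Set (EuclideanSpace ℝ (Fin 3))) = 0 := by
      rw [withDensity_apply _ hsm]
      apply setLIntegral_measure_zero
      rw [Measure.restrict_apply hsm]
      exact measure_mono_null inter_subset_left (measure_singleton _)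
    have happ := congrArg (fun m : Measure (EuclideanSpace ℝ (Fin 3)) =>
      m {axisPt t}) hcontra
    simp only [Measure.add_apply, Measure.smul_apply, smul_eq_mul] at happ
    rw [hwd0] at happ
    have hne' : axisPt t' ∉ ({axisPt t} : Set (EuclideanSpace ℝ (Fin 3))) := by
      intro h
      apply hne
      have h2 := congrArg (fun y : EuclideanSpace ℝ (Fin 3) => y 2) (mem_singleton_iff.mp h)
      exact h2.symm
    rw [Measure.dirac_apply_of_mem (mem_singleton _),
      Measure.dirac_apply' _ hsm, indicator_of_notMem hne'] at happ
    simp only [mul_one, mul_zero, add_zero, zero_add] at happ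
    exact (ENNReal.ofReal_pos.mpr hαpos).ne' happ
end

section
/- Let Ω = B₁(0) × (0,1) ⊂ ℝ³ (B₁(0) the open unit disc of ℝ²), a(x) = 1 − √(x₁²+x₂²), and 0 < ρ < 1/(2π). Let ν be any nonzero finite positive Borel measure on Ω̄ whose support is contained in the axis segment Ω₀ = {(0,0,x₃) : x₃ ∈ [0,1]} (for instance a singular continuous measure on the axis with no atomic part, such as the devil's-staircase measure). Set M = ν(Ω̄)/(1 − 2πρ). Then the positive Borel measure μ := ν + (ρM/√(x₁²+x₂²)) dx solves the spectral problem at λ_p = −1: for every Borel set A ⊆ Ω̄, ρ μ(Ω̄) · Leb(A ∩ Ω) = ∫_A √(x₁²+x₂²) dμ(x). -/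
open MeasureTheory Set Metric

open scoped ENNReal NNReal

theorem vol_subcyl (r : ℝ) (hr : 0 ≤ r) :
    volume {x : EuclideanSpace ℝ (Fin 3) | x 0 ^ 2 + x 1 ^ 2 < r ^ 2 ∧ x 2 ∈ Set.Ioo (0:ℝ) 1}
      = ENNReal.ofReal (Real.pi * r ^ 2) := by
  have e3 := EuclideanSpace.volume_preserving_symm_measurableEquiv_toLp (Fin 3)
  have hp := measurePreserving_piFinSuccAbove (fun _ : Fin 3 => (volume : Measure ℝ)) 2
  have e2 := EuclideanSpace.volume_preserving_symm_measurableEquiv_toLp (Fin 2)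
  set D : Set (Fin 2 → ℝ) := {y | y 0 ^ 2 + y 1 ^ 2 < r ^ 2} with hD
  have hDm : MeasurableSet D := measurableSet_lt (by fun_prop) measurable_const
  have hq : Measurable fun y : Fin 3 → ℝ => y 0 ^ 2 + y 1 ^ 2 := by fun_prop
  have hSm : MeasurableSet {y : Fin 3 → ℝ | y 0 ^ 2 + y 1 ^ 2 < r ^ 2 ∧ y 2 ∈ Set.Ioo (0:ℝ) 1} :=
    (measurableSet_lt hq measurable_const).inter ((measurable_pi_apply 2) measurableSet_Ioo)
  have step1 : volume {x : EuclideanSpace ℝ (Fin 3) | x 0 ^ 2 + x 1 ^ 2 < r ^ 2 ∧ x 2 ∈ Set.Ioo (0:ℝ) 1}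
      = Measure.pi (fun _ : Fin 3 => volume) {y : Fin 3 → ℝ | y 0 ^ 2 + y 1 ^ 2 < r ^ 2 ∧ y 2 ∈ Set.Ioo (0:ℝ) 1} :=
    e3.measure_preimage hSm.nullMeasurableSet
  have step2 : {y : Fin 3 → ℝ | y 0 ^ 2 + y 1 ^ 2 < r ^ 2 ∧ y 2 ∈ Set.Ioo (0:ℝ) 1}
      = (MeasurableEquiv.piFinSuccAbove (fun _ : Fin 3 => ℝ) 2) ⁻¹' ((Set.Ioo (0:ℝ) 1) ×ˢ D) := by
    ext y
    have h0 : Fin.succAbove (2 : Fin 3) 0 = 0 := by decide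
    have h1 : Fin.succAbove (2 : Fin 3) 1 = 1 := by decide
    simp [MeasurableEquiv.piFinSuccAbove, Fin.insertNthEquiv, hD, Fin.removeNth, h0, h1, and_comm]
  have step3 : Measure.pi (fun _ : Fin 3 => volume) {y : Fin 3 → ℝ | y 0 ^ 2 + y 1 ^ 2 < r ^ 2 ∧ y 2 ∈ Set.Ioo (0:ℝ) 1}
      = (Measure.pi (fun _ : Fin 2 => volume)) D := by
    rw [step2, hp.measure_preimage ((measurableSet_Ioo.prod hDm)).nullMeasurableSet,
      Measure.prod_prod, Real.volume_Ioo]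
    simp
  have step4 : (Measure.pi (fun _ : Fin 2 => volume)) D
      = volume (ball (0 : EuclideanSpace ℝ (Fin 2)) r) := by
    rw [show (Measure.pi fun _ : Fin 2 => (volume : Measure ℝ)) = volume from rfl,
      ← e2.measure_preimage hDm.nullMeasurableSet]
    congr 1
    ext x
    rw [EuclideanSpace.ball_zero_eq _ hr]
    simp [hD, Fin.sum_univ_two, MeasurableEquiv.coe_toLp_symm]
  rw [step1, step3, step4, EuclideanSpace.volume_ball]
  rw [← ENNReal.ofReal_pow hr, ← ENNReal.ofReal_mul (by positivity)]
  congr 1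
  rw [show ((Fintype.card (Fin 2) : ℝ)) = 2 by simp]
  norm_num
  rw [Real.sq_sqrt Real.pi_nonneg]; ring

theorem axis_null :
    volume {x : EuclideanSpace ℝ (Fin 3) | x 0 ^ 2 + x 1 ^ 2 = 0 ∧ x 2 ∈ Set.Ioo (0:ℝ) 1} = 0 := by
  rw [← le_zero_iff]
  refine ENNReal.le_of_forall_pos_le_add fun ε hε _ => ?_
  rw [zero_add]
  set r : ℝ := Real.sqrt (ε / Real.pi) with hr
  have hr0 : 0 ≤ r := Real.sqrt_nonneg _
  have hrpos : 0 < r := Real.sqrt_pos.2 (div_pos (by exact_mod_cast hε) Real.pi_pos)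
  calc volume {x : EuclideanSpace ℝ (Fin 3) | x 0 ^ 2 + x 1 ^ 2 = 0 ∧ x 2 ∈ Set.Ioo (0:ℝ) 1}
      ≤ volume {x : EuclideanSpace ℝ (Fin 3) | x 0 ^ 2 + x 1 ^ 2 < r ^ 2 ∧ x 2 ∈ Set.Ioo (0:ℝ) 1} := by
        apply measure_mono
        rintro x ⟨h1, h2⟩
        exact ⟨h1 ▸ (by positivity), h2⟩
    _ = ENNReal.ofReal (Real.pi * r ^ 2) := vol_subcyl r hr0
    _ = (ε : ℝ≥0∞) := by
        rw [hr, Real.sq_sqrt (by positivity), mul_div_cancel₀ _ Real.pi_pos.ne']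
        simp [ENNReal.ofReal_coe_nnreal]

lemma meas_q : Measurable fun x : EuclideanSpace ℝ (Fin 3) => x 0 ^ 2 + x 1 ^ 2 := by
  have h0 : Measurable fun x : EuclideanSpace ℝ (Fin 3) => x 0 :=
    (measurable_pi_apply (0 : Fin 3)).comp (WithLp.measurable_ofLp 2 (Fin 3 → ℝ))
  have h1 : Measurable fun x : EuclideanSpace ℝ (Fin 3) => x 1 :=
    (measurable_pi_apply (1 : Fin 3)).comp (WithLp.measurable_ofLp 2 (Fin 3 → ℝ))
  fun_prop

lemma meas_cyl : MeasurableSet _root_.cylinder := by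
  have h2 : Measurable fun x : EuclideanSpace ℝ (Fin 3) => x 2 :=
    (measurable_pi_apply (2 : Fin 3)).comp (WithLp.measurable_ofLp 2 (Fin 3 → ℝ))
  exact (measurableSet_lt meas_q measurable_const).inter (h2 measurableSet_Ioo)

theorem ioi_part :
    ∫⁻ t in Set.Ioi (1:ℝ), ENNReal.ofReal (Real.pi * (1/t) ^ 2) = ENNReal.ofReal Real.pi := by
  have h1 : IntegrableOn (fun t : ℝ => t ^ (-2:ℝ)) (Set.Ioi (1:ℝ)) :=
    integrableOn_Ioi_rpow_of_lt (by norm_num) one_pos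
  have h2 : IntegrableOn (fun t : ℝ => Real.pi * t ^ (-2:ℝ)) (Set.Ioi (1:ℝ)) :=
    h1.const_mul Real.pi
  have heq : ∀ t ∈ Set.Ioi (1:ℝ), Real.pi * t ^ (-2:ℝ) = Real.pi * (1/t) ^ 2 := by
    intro t ht
    have ht0 : (0:ℝ) < t := lt_trans one_pos ht
    rw [Real.rpow_neg ht0.le, show ((2:ℝ)) = ((2:ℕ):ℝ) by norm_num, Real.rpow_natCast]
    field_simp
  have hInt : IntegrableOn (fun t : ℝ => Real.pi * (1/t) ^ 2) (Set.Ioi (1:ℝ)) :=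
    h2.congr_fun heq measurableSet_Ioi
  rw [← ofReal_integral_eq_lintegral_ofReal hInt
    (Filter.Eventually.of_forall fun t => by positivity)]
  congr 1
  have : ∫ t in Set.Ioi (1:ℝ), Real.pi * (1/t) ^ 2
      = Real.pi * ∫ t in Set.Ioi (1:ℝ), (t : ℝ) ^ (-2 : ℝ) := by
    rw [← integral_const_mul]
    exact (setIntegral_congr_fun measurableSet_Ioi heq).symm
  rw [this, integral_Ioi_rpow_of_lt (by norm_num) one_pos]
  norm_num

set_option maxHeartbeats 1000000 in
theorem key_lintegral_s19 :
    ∫⁻ x in _root_.cylinder, ENNReal.ofReal (1 / Real.sqrt (x 0 ^ 2 + x 1 ^ 2)) ∂volume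
      = ENNReal.ofReal (2 * Real.pi) := by
  have hfm : Measurable fun x : EuclideanSpace ℝ (Fin 3) => 1 / Real.sqrt (x 0 ^ 2 + x 1 ^ 2) :=
    (Measurable.sqrt meas_q).const_div 1
  have hnn : (0 : EuclideanSpace ℝ (Fin 3) → ℝ) ≤ᵐ[volume.restrict _root_.cylinder]
      fun x => 1 / Real.sqrt (x 0 ^ 2 + x 1 ^ 2) :=
    Filter.Eventually.of_forall fun x => by positivity
  have key := lintegral_eq_lintegral_meas_lt (volume.restrict _root_.cylinder) hnn hfm.aemeasurable
  rw [key]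
  have hmeas : ∀ t : ℝ, 0 < t →
      (volume.restrict _root_.cylinder) {a | t < 1 / Real.sqrt (a 0 ^ 2 + a 1 ^ 2)}
        = ENNReal.ofReal (Real.pi * (min 1 (1/t)) ^ 2) := by
    intro t ht
    set m : ℝ := min 1 (1/t) with hm
    have hm0 : 0 < m := lt_min one_pos (by positivity)
    rw [Measure.restrict_apply (measurableSet_lt measurable_const hfm)]
    have hset : {a : EuclideanSpace ℝ (Fin 3) | t < 1 / Real.sqrt (a 0 ^ 2 + a 1 ^ 2)} ∩ _root_.cylinder
        = {x : EuclideanSpace ℝ (Fin 3) | x 0 ^ 2 + x 1 ^ 2 < m ^ 2 ∧ x 2 ∈ Set.Ioo (0:ℝ) 1}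
          \ {x : EuclideanSpace ℝ (Fin 3) | x 0 ^ 2 + x 1 ^ 2 = 0 ∧ x 2 ∈ Set.Ioo (0:ℝ) 1} := by
      ext x
      have hq0 : 0 ≤ x 0 ^ 2 + x 1 ^ 2 := by positivity
      simp only [Set.mem_inter_iff, Set.mem_setOf_eq, Set.mem_diff, _root_.cylinder]
      constructor
      · rintro ⟨hlt, hq1, hx2⟩
        have hqpos : 0 < x 0 ^ 2 + x 1 ^ 2 := by
          rcases hq0.lt_or_eq with h | h
          · exact h
          · exfalso; rw [← h, Real.sqrt_zero, div_zero] at hlt; linarith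
        have hs : 0 < Real.sqrt (x 0 ^ 2 + x 1 ^ 2) := Real.sqrt_pos.2 hqpos
        have h1t : Real.sqrt (x 0 ^ 2 + x 1 ^ 2) < 1 / t := by
          rw [lt_div_iff₀ ht]
          have := (lt_div_iff₀ hs).1 hlt
          linarith
        have hq1t : x 0 ^ 2 + x 1 ^ 2 < (1/t) ^ 2 := by
          have := Real.sq_sqrt hq0
          nlinarith [Real.sqrt_nonneg (x 0 ^ 2 + x 1 ^ 2)]
        refine ⟨⟨?_, hx2⟩, fun h => by nlinarith [h.1]⟩
        rcases le_total (1:ℝ) (1/t) with h | h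
        · rw [hm, min_eq_left h]; nlinarith
        · rw [hm, min_eq_right h]; exact hq1t
      · rintro ⟨⟨hqm, hx2⟩, hne⟩
        have hqpos : 0 < x 0 ^ 2 + x 1 ^ 2 := by
          rcases hq0.lt_or_eq with h | h
          · exact h
          · exact absurd ⟨h.symm, hx2⟩ hne
        have hs : 0 < Real.sqrt (x 0 ^ 2 + x 1 ^ 2) := Real.sqrt_pos.2 hqpos
        have hm1 : m ≤ 1 := min_le_left _ _
        have hmt : m ≤ 1/t := min_le_right _ _
        have hsq : Real.sqrt (x 0 ^ 2 + x 1 ^ 2) < m := by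
          have := Real.sq_sqrt hq0
          nlinarith [Real.sqrt_nonneg (x 0 ^ 2 + x 1 ^ 2)]
        refine ⟨?_, by nlinarith, hx2⟩
        rw [lt_div_iff₀ hs]
        calc t * Real.sqrt (x 0 ^ 2 + x 1 ^ 2) < t * m := by nlinarith
          _ ≤ t * (1/t) := by nlinarith
          _ = 1 := by field_simp
    rw [hset, measure_diff_null axis_null, vol_subcyl m hm0.le]
  have hcong : ∫⁻ t in Set.Ioi (0:ℝ),
      (volume.restrict _root_.cylinder) {a | t < 1 / Real.sqrt (a 0 ^ 2 + a 1 ^ 2)}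
      = ∫⁻ t in Set.Ioi (0:ℝ), ENNReal.ofReal (Real.pi * (min 1 (1/t)) ^ 2) :=
    setLIntegral_congr_fun measurableSet_Ioi
      (fun t ht => hmeas t ht)
  rw [hcong, ← Set.Ioc_union_Ioi_eq_Ioi (zero_le_one (α := ℝ)),
    lintegral_union measurableSet_Ioi (Set.Ioc_disjoint_Ioi le_rfl)]
  have h1 : ∫⁻ t in Set.Ioc (0:ℝ) 1, ENNReal.ofReal (Real.pi * (min 1 (1/t)) ^ 2)
      = ENNReal.ofReal Real.pi := by
    have hcg : ∫⁻ t in Set.Ioc (0:ℝ) 1, ENNReal.ofReal (Real.pi * (min 1 (1/t)) ^ 2)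
        = ∫⁻ _ in Set.Ioc (0:ℝ) 1, ENNReal.ofReal Real.pi := by
      refine setLIntegral_congr_fun measurableSet_Ioc (fun t ht => ?_)
      have : (1:ℝ) ≤ 1/t := (le_div_iff₀ ht.1).2 (by linarith [ht.2])
      rw [min_eq_left this]
      norm_num
    rw [hcg, setLIntegral_const, Real.volume_Ioc]
    norm_num
  have h2 : ∫⁻ t in Set.Ioi (1:ℝ), ENNReal.ofReal (Real.pi * (min 1 (1/t)) ^ 2)
      = ENNReal.ofReal Real.pi := by
    have hcg : ∫⁻ t in Set.Ioi (1:ℝ), ENNReal.ofReal (Real.pi * (min 1 (1/t)) ^ 2)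
        = ∫⁻ t in Set.Ioi (1:ℝ), ENNReal.ofReal (Real.pi * (1/t) ^ 2) := by
      refine setLIntegral_congr_fun measurableSet_Ioi (fun t ht => ?_)
      have ht1 : (1:ℝ) < t := ht
      have : (1:ℝ)/t ≤ 1 := by rw [div_le_one (by linarith)]; linarith
      rw [min_eq_right this]
    rw [hcg, ioi_part]
  rw [h1, h2, ← ENNReal.ofReal_add Real.pi_nonneg Real.pi_nonneg]
  congr 1
  ring

theorem axis_sub_closure :
    {x : EuclideanSpace ℝ (Fin 3) | x 0 = 0 ∧ x 1 = 0 ∧ x 2 ∈ Set.Icc (0 : ℝ) 1}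
      ⊆ closure _root_.cylinder := by
  rintro x ⟨h0, h1, h2⟩
  rw [Metric.mem_closure_iff]
  intro ε hε
  set δ : ℝ := min (ε/2) (1/4) with hδ
  have hδ0 : 0 < δ := lt_min (by linarith) (by norm_num)
  have hδ4 : δ ≤ 1/4 := min_le_right _ _
  have hδε : δ < ε := lt_of_le_of_lt (min_le_left _ _) (by linarith)
  set c : ℝ := max δ (min (1-δ) (x 2)) with hc
  set y : EuclideanSpace ℝ (Fin 3) := !₂[0, 0, c] with hy
  have hy0 : y 0 = 0 := rfl
  have hy1 : y 1 = 0 := rfl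
  have hy2 : y 2 = c := rfl
  refine ⟨y, ⟨?_, ?_⟩, ?_⟩
  · rw [hy0, hy1]; norm_num
  · rw [hy2]
    constructor
    · exact lt_of_lt_of_le hδ0 (le_max_left _ _)
    · have : c ≤ max δ (1-δ) := max_le_max le_rfl (min_le_left _ _)
      have : max δ (1-δ) = 1-δ := max_eq_right (by linarith)
      calc c ≤ max δ (1-δ) := max_le_max le_rfl (min_le_left _ _)
        _ = 1 - δ := this
        _ < 1 := by linarith
  · have hdist : dist x y = |x 2 - c| := by
      rw [EuclideanSpace.dist_eq, Fin.sum_univ_three, hy0, hy1, hy2, h0, h1]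
      simp [Real.dist_eq]
      rw [Real.sqrt_eq_iff_eq_sq] <;> [skip; positivity; positivity]
      rw [sq_abs]
    have habs : |x 2 - c| ≤ δ := by
      rw [abs_le]
      constructor
      · have hle : c ≤ x 2 + δ := by
          apply max_le (by linarith [h2.1])
          calc min (1-δ) (x 2) ≤ x 2 := min_le_right _ _
            _ ≤ x 2 + δ := by linarith
        linarith
      · have hge : x 2 - δ ≤ c := by
          calc x 2 - δ ≤ min (1-δ) (x 2) := le_min (by linarith [h2.2]) (by linarith)
            _ ≤ c := le_max_right _ _
        linarith
    rw [hdist]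
    linarith

/-- For the unit cylinder, `a(x) = 1 - √(x₁²+x₂²)` and `0 < ρ < 1/(2π)`: for any
nonzero finite positive measure `ν` supported in the axis segment
`Ω₀ = {(0,0,x₃) : x₃ ∈ [0,1]}` and `M = ν(Ω̄)/(1 - 2πρ)`, the measure
`μ = ν + (ρM/√(x₁²+x₂²)) dx` solves the spectral problem at `λ_p = -1`. -/
theorem stmt19 (ρ : ℝ) (hρ0 : 0 < ρ) (hρ : ρ < 1 / (2 * Real.pi))
    (ν : Measure (EuclideanSpace ℝ (Fin 3))) [IsFiniteMeasure ν] (hν0 : ν ≠ 0)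
    (hνsupp : ν {x : EuclideanSpace ℝ (Fin 3) |
      x 0 = 0 ∧ x 1 = 0 ∧ x 2 ∈ Set.Icc (0 : ℝ) 1}ᶜ = 0)
    (M : ℝ) (hM : M = (ν Set.univ).toReal / (1 - 2 * Real.pi * ρ)) :
    ∀ A : Set (EuclideanSpace ℝ (Fin 3)), MeasurableSet A → A ⊆ closure cylinder →
      ρ * ((ν + (volume.restrict cylinder).withDensity
            (fun x => ENNReal.ofReal (ρ * M / Real.sqrt (x 0 ^ 2 + x 1 ^ 2))))
            (closure cylinder)).toReal *
          (volume (A ∩ cylinder)).toReal =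
        ∫ x in A, Real.sqrt (x 0 ^ 2 + x 1 ^ 2)
          ∂(ν + (volume.restrict cylinder).withDensity
            (fun x => ENNReal.ofReal (ρ * M / Real.sqrt (x 0 ^ 2 + x 1 ^ 2)))) := by
  intro A hA hAsub
  set dens : EuclideanSpace ℝ (Fin 3) → ℝ≥0∞ :=
    fun x => ENNReal.ofReal (ρ * M / Real.sqrt (x 0 ^ 2 + x 1 ^ 2)) with hdens
  set wd : Measure (EuclideanSpace ℝ (Fin 3)) :=
    (volume.restrict (_root_.cylinder)).withDensity dens with hwd
  -- basic positivity facts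
  have h2π : (0:ℝ) < 2 * Real.pi := by positivity
  have hπρ : 0 < 1 - 2 * Real.pi * ρ := by
    have := (lt_div_iff₀ h2π).1 hρ
    linarith
  have hM0 : 0 ≤ M := by
    rw [hM]; positivity
  have hρM : 0 ≤ ρ * M := by positivity
  have hdm : Measurable dens := (meas_q.sqrt.const_div (ρ * M)).ennreal_ofReal
  have hfm : Measurable fun x : EuclideanSpace ℝ (Fin 3) => Real.sqrt (x 0 ^ 2 + x 1 ^ 2) :=
    meas_q.sqrt
  -- measure of closure under ν
  have hνcl : ν (closure (_root_.cylinder)) = ν Set.univ := by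
    apply le_antisymm (measure_mono (Set.subset_univ _))
    calc ν Set.univ ≤ ν (closure (_root_.cylinder))
          + ν (closure (_root_.cylinder))ᶜ := measure_le_inter_add_diff ν _ _ |>.trans_eq (by
            rw [Set.univ_inter, Set.diff_eq, Set.univ_inter])
      _ = ν (closure (_root_.cylinder)) := by
          rw [measure_mono_null (Set.compl_subset_compl.2 axis_sub_closure) hνsupp, add_zero]
  -- measure of closure under wd
  have hwdcl : wd (closure (_root_.cylinder)) = ENNReal.ofReal (2 * Real.pi * (ρ * M)) := by
    rw [hwd, withDensity_apply _ measurableSet_closure,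
      Measure.restrict_restrict measurableSet_closure,
      Set.inter_eq_self_of_subset_right subset_closure]
    have hpt : ∀ x : EuclideanSpace ℝ (Fin 3),
        dens x = ENNReal.ofReal (ρ * M) * ENNReal.ofReal (1 / Real.sqrt (x 0 ^ 2 + x 1 ^ 2)) := by
      intro x
      simp only [hdens]
      rw [← ENNReal.ofReal_mul hρM, mul_one_div]
    calc ∫⁻ x in _root_.cylinder, dens x ∂volume
        = ∫⁻ x in _root_.cylinder,
            ENNReal.ofReal (ρ * M) * ENNReal.ofReal (1 / Real.sqrt (x 0 ^ 2 + x 1 ^ 2)) ∂volume :=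
          lintegral_congr fun x => hpt x
      _ = ENNReal.ofReal (ρ * M) * ∫⁻ x in _root_.cylinder,
            ENNReal.ofReal (1 / Real.sqrt (x 0 ^ 2 + x 1 ^ 2)) ∂volume :=
          lintegral_const_mul _ ((meas_q.sqrt.const_div 1).ennreal_ofReal)
      _ = ENNReal.ofReal (ρ * M) * ENNReal.ofReal (2 * Real.pi) := by rw [key_lintegral_s19]
      _ = ENNReal.ofReal (2 * Real.pi * (ρ * M)) := by
          rw [← ENNReal.ofReal_mul hρM, mul_comm]
  -- finiteness of volume of A ∩ cylinder
  have hvolfin : volume (A ∩ _root_.cylinder) ≠ ⊤ := by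
    have h1 : volume (A ∩ _root_.cylinder) ≤ volume (_root_.cylinder) :=
      measure_mono Set.inter_subset_right
    have h2 : volume (_root_.cylinder) = ENNReal.ofReal (Real.pi * 1 ^ 2) := by
      rw [← vol_subcyl 1 zero_le_one]
      congr 1
      ext x
      norm_num [_root_.cylinder]
    exact ne_top_of_le_ne_top (by simp [h2]) h1
  -- RHS computation
  have hrhs : ∫ x in A, Real.sqrt (x 0 ^ 2 + x 1 ^ 2) ∂(ν + wd)
      = (ρ * M) * (volume (A ∩ _root_.cylinder)).toReal := by
    rw [integral_eq_lintegral_of_nonneg_ae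
      (Filter.Eventually.of_forall fun x => Real.sqrt_nonneg _)
      hfm.aestronglyMeasurable]
    have hsplit : ∫⁻ x in A, ENNReal.ofReal (Real.sqrt (x 0 ^ 2 + x 1 ^ 2)) ∂(ν + wd)
        = (∫⁻ x in A, ENNReal.ofReal (Real.sqrt (x 0 ^ 2 + x 1 ^ 2)) ∂ν)
          + ∫⁻ x in A, ENNReal.ofReal (Real.sqrt (x 0 ^ 2 + x 1 ^ 2)) ∂wd := by
      rw [Measure.restrict_add, lintegral_add_measure]
    have hν_zero : ∫⁻ x in A, ENNReal.ofReal (Real.sqrt (x 0 ^ 2 + x 1 ^ 2)) ∂ν = 0 := by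
      refine le_antisymm ?_ zero_le
      calc ∫⁻ x in A, ENNReal.ofReal (Real.sqrt (x 0 ^ 2 + x 1 ^ 2)) ∂ν
          ≤ ∫⁻ x, ENNReal.ofReal (Real.sqrt (x 0 ^ 2 + x 1 ^ 2)) ∂ν :=
            setLIntegral_le_lintegral _ _
        _ = 0 := by
            rw [← lintegral_zero (μ := ν)]
            apply lintegral_congr_ae
            have hax : ∀ᵐ x ∂ν, x ∈ {x : EuclideanSpace ℝ (Fin 3) |
                x 0 = 0 ∧ x 1 = 0 ∧ x 2 ∈ Set.Icc (0 : ℝ) 1} := by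
              rw [MeasureTheory.ae_iff]
              exact hνsupp
            filter_upwards [hax] with x hx
            rcases hx with ⟨h0, h1, -⟩
            rw [h0, h1]
            norm_num
    have hwd_val : ∫⁻ x in A, ENNReal.ofReal (Real.sqrt (x 0 ^ 2 + x 1 ^ 2)) ∂wd
        = ENNReal.ofReal (ρ * M) * volume (A ∩ _root_.cylinder) := by
      rw [hwd, restrict_withDensity hA,
        lintegral_withDensity_eq_lintegral_mul _ hdm hfm.ennreal_ofReal,
        Measure.restrict_restrict hA]
      have haeq : ∀ᵐ x ∂(volume.restrict (A ∩ _root_.cylinder)), x 0 ^ 2 + x 1 ^ 2 ≠ 0 := by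
        rw [ae_iff, Measure.restrict_apply
          (by simp only [ne_eq, not_not]; exact meas_q (measurableSet_singleton 0))]
        refine measure_mono_null (fun x hx => ?_) axis_null
        exact ⟨not_not.1 hx.1, hx.2.2.2⟩
      calc ∫⁻ x in A ∩ _root_.cylinder,
            (dens * fun y : EuclideanSpace ℝ (Fin 3) =>
              ENNReal.ofReal (Real.sqrt (y 0 ^ 2 + y 1 ^ 2))) x ∂volume
          = ∫⁻ _x in A ∩ _root_.cylinder, ENNReal.ofReal (ρ * M) ∂volume := by
            apply lintegral_congr_ae
            filter_upwards [haeq] with x hx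
            have hq0 : 0 ≤ x 0 ^ 2 + x 1 ^ 2 := by positivity
            have hs : 0 < Real.sqrt (x 0 ^ 2 + x 1 ^ 2) :=
              Real.sqrt_pos.2 (hq0.lt_of_ne (Ne.symm hx))
            simp only [hdens, Pi.mul_apply]
            rw [← ENNReal.ofReal_mul (by positivity), div_mul_cancel₀ _ hs.ne']
        _ = ENNReal.ofReal (ρ * M) * volume (A ∩ _root_.cylinder) := by
            rw [setLIntegral_const]
    rw [hsplit, hν_zero, zero_add, hwd_val, ENNReal.toReal_mul,
      ENNReal.toReal_ofReal hρM]
  -- LHS computation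
  have hlhs : ((ν + wd) (closure (_root_.cylinder))).toReal
      = (ν Set.univ).toReal + 2 * Real.pi * (ρ * M) := by
    rw [Measure.add_apply, hνcl, hwdcl,
      ENNReal.toReal_add (measure_ne_top ν _) ENNReal.ofReal_ne_top,
      ENNReal.toReal_ofReal (by positivity)]
  show ρ * ((ν + wd) (closure (_root_.cylinder))).toReal * (volume (A ∩ _root_.cylinder)).toReal
      = ∫ x in A, Real.sqrt (x 0 ^ 2 + x 1 ^ 2) ∂(ν + wd)
  rw [hlhs, hrhs]
  have hνM : (ν Set.univ).toReal = M * (1 - 2 * Real.pi * ρ) := by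
    rw [hM]
    field_simp
  rw [hνM]
  ring
end
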